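/- arXiv:2105.05356 — 5 statements merged into one kernel-verified Lean document; each statement's English description precedes it below -/
import Mathlib

section
/- For the fractional kernel K(u,s) = η(u-s)^{H-1/2} with H ∈ (0,1), there exists a constant c > 0 (depending on η, H, T) such that for all T ≤ u₁ < u₂, (∫_0^T (K(u₁,s) - K(u₂,s))² ds)^{1/2} ≤ c(u₂ - u₁)(u₂ - T)^{H-1}. -/
open Real MeasureTheory

/-- MVT bound for rpow differences. -/
lemma kl_mvt {p a b : ℝ} (hp : p ≤ 1) (ha : 0 < a) (hab : a ≤ b) :
    |a ^ p - b ^ p| ≤ |p| * a ^ (p - 1) * (b - a) := by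
  have hf : ∀ x ∈ Set.Icc a b, HasDerivWithinAt (fun y : ℝ => y ^ p)
      (p * x ^ (p - 1)) (Set.Icc a b) x := fun x hx =>
    (Real.hasDerivAt_rpow_const (Or.inl (ne_of_gt (lt_of_lt_of_le ha hx.1)))).hasDerivWithinAt
  have bound : ∀ x ∈ Set.Icc a b, ‖p * x ^ (p - 1)‖ ≤ |p| * a ^ (p - 1) := by
    intro x hx
    rw [norm_mul, Real.norm_eq_abs, Real.norm_eq_abs,
      abs_of_nonneg (Real.rpow_nonneg (le_of_lt (lt_of_lt_of_le ha hx.1)) _)]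
    exact mul_le_mul_of_nonneg_left
      (Real.rpow_le_rpow_of_nonpos ha hx.1 (by linarith)) (abs_nonneg p)
  have := Convex.norm_image_sub_le_of_norm_hasDerivWithin_le hf bound (convex_Icc a b)
    (Set.left_mem_Icc.2 hab) (Set.right_mem_Icc.2 hab)
  calc |a ^ p - b ^ p| = ‖b ^ p - a ^ p‖ := by rw [Real.norm_eq_abs, abs_sub_comm]
    _ ≤ |p| * a ^ (p - 1) * ‖b - a‖ := this
    _ = |p| * a ^ (p - 1) * (b - a) := by
        rw [Real.norm_eq_abs, abs_of_nonneg (show (0:ℝ) ≤ b - a by linarith)]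

lemma kl_mvt_sq {p a b : ℝ} (hp : p ≤ 1) (ha : 0 < a) (hab : a ≤ b) :
    (a ^ p - b ^ p) ^ 2 ≤ p ^ 2 * (b - a) ^ 2 * a ^ (2 * p - 2) := by
  have h := kl_mvt hp ha hab
  have h2 : (a ^ p - b ^ p) ^ 2 ≤ (|p| * a ^ (p - 1) * (b - a)) ^ 2 := by
    rw [← sq_abs (a ^ p - b ^ p)]
    exact pow_le_pow_left₀ (abs_nonneg _) h 2
  refine h2.trans_eq ?_
  have h3 : (a ^ (p - 1)) ^ 2 = a ^ (2 * p - 2) := by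
    rw [← Real.rpow_natCast (a ^ (p - 1)) 2, ← Real.rpow_mul ha.le]
    norm_num; ring_nf
  rw [mul_pow, mul_pow, sq_abs, h3]; ring

lemma kl_sq_rpow {p a : ℝ} (ha : 0 ≤ a) : (a ^ p) ^ 2 = a ^ (2 * p) := by
  rw [← Real.rpow_natCast (a ^ p) 2, ← Real.rpow_mul ha]
  norm_num; ring_nf

lemma kl_ii1 {q : ℝ} (hq : -1 < q) (u lo hi : ℝ) :
    IntervalIntegrable (fun s => (u - s) ^ q) volume lo hi := by
  simpa using (intervalIntegral.intervalIntegrable_rpow' (a := u - lo) (b := u - hi)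
    hq).comp_sub_left u

lemma kl_ii2 (q u lo hi : ℝ) (hlo : lo ≤ hi) (hhi : hi < u) :
    IntervalIntegrable (fun s => (u - s) ^ q) volume lo hi := by
  apply ContinuousOn.intervalIntegrable
  intro s hs
  rw [Set.uIcc_of_le hlo] at hs
  have hus : u - s ≠ 0 := by have := hs.2; intro h; nlinarith [hs.2]
  exact ((Real.continuousAt_rpow_const _ q (Or.inl hus)).comp
    ((continuous_const.sub continuous_id).continuousAt)).continuousWithinAt

lemma kl_subst (q u lo hi : ℝ) :
    (∫ s in lo..hi, (u - s) ^ q) = ∫ t in (u - hi)..(u - lo), t ^ q :=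
  intervalIntegral.integral_comp_sub_left (fun t => t ^ q) u

lemma kl_int1 {q c d e : ℝ} (hq : -1 < q) (hc : 0 ≤ c) (hcd : c ≤ d) (hde : d ≤ e) :
    (∫ t in c..d, t ^ q) ≤ e ^ (q + 1) / (q + 1) := by
  rw [integral_rpow (Or.inl hq)]
  have h1 : 0 ≤ c ^ (q + 1) := Real.rpow_nonneg hc _
  have h2 : d ^ (q + 1) ≤ e ^ (q + 1) :=
    Real.rpow_le_rpow (hc.trans hcd) hde (by linarith)
  have hq1 : (0:ℝ) < q + 1 := by linarith
  apply div_le_div_of_nonneg_right ?_ hq1.le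
  linarith

lemma kl_int2 {q c d : ℝ} (hq : q < -1) (hc : 0 < c) (hcd : c ≤ d) :
    (∫ t in c..d, t ^ q) ≤ c ^ (q + 1) / (-(q + 1)) := by
  rw [integral_rpow (Or.inr ⟨by linarith, Set.notMem_uIcc_of_lt hc (lt_of_lt_of_le hc hcd)⟩)]
  have h1 : 0 ≤ d ^ (q + 1) := Real.rpow_nonneg (hc.le.trans hcd) _
  have heq : (d ^ (q + 1) - c ^ (q + 1)) / (q + 1)
      = (c ^ (q + 1) - d ^ (q + 1)) / (-(q + 1)) := by
    rw [div_eq_div_iff (by linarith) (by linarith)]; ring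
  rw [heq]
  apply div_le_div_of_nonneg_right ?_ (by linarith : (0:ℝ) ≤ -(q+1))
  linarith

lemma kl_int1' {q c d e D : ℝ} (hq : -1 < q) (hc : 0 ≤ c) (hcd : c ≤ d) (hde : d ≤ e)
    (hD : e ^ (q + 1) ≤ D * (q + 1)) : (∫ t in c..d, t ^ q) ≤ D := by
  have hq1 : (0:ℝ) < q + 1 := by linarith
  calc (∫ t in c..d, t ^ q) ≤ e ^ (q + 1) / (q + 1) := kl_int1 hq hc hcd hde
    _ ≤ D := by rw [div_le_iff₀ hq1]; exact hD

lemma kl_int2' {q c d D : ℝ} (hq : q < -1) (hc : 0 < c) (hcd : c ≤ d)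
    (hD : c ^ (q + 1) ≤ D * (-(q + 1))) : (∫ t in c..d, t ^ q) ≤ D := by
  have hq1 : (0:ℝ) < -(q + 1) := by linarith
  calc (∫ t in c..d, t ^ q) ≤ c ^ (q + 1) / (-(q + 1)) := kl_int2 hq hc hcd
    _ ≤ D := by rw [div_le_iff₀ hq1]; exact hD

lemma kl_half {x M q : ℝ} (hM : 0 < M) (hx : M ≤ 2 * x) (hq0 : q ≤ 0) (hq2 : -2 ≤ q) :
    x ^ q ≤ 4 * M ^ q := by
  have hx0 : 0 < M / 2 := by linarith
  have h1 : x ^ q ≤ (M / 2) ^ q := Real.rpow_le_rpow_of_nonpos hx0 (by linarith) hq0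
  have h2 : (M / 2) ^ q = M ^ q / 2 ^ q := Real.div_rpow hM.le (by norm_num : (0:ℝ) ≤ 2) q
  have h3 : (2:ℝ) ^ (-2:ℝ) ≤ (2:ℝ) ^ q := Real.rpow_le_rpow_of_exponent_le one_le_two hq2
  have h4 : (2:ℝ) ^ (-2:ℝ) = 1/4 := by
    rw [show (-2:ℝ) = ((-2 : ℤ) : ℝ) by norm_num, Real.rpow_intCast]; norm_num
  have h34 : (1:ℝ)/4 ≤ (2:ℝ) ^ q := h4 ▸ h3
  have h5 : 0 < (2:ℝ) ^ q := Real.rpow_pos_of_pos two_pos q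
  have hMq : 0 ≤ M ^ q := Real.rpow_nonneg hM.le q
  have h6 : M ^ q / 2 ^ q ≤ 4 * M ^ q := by
    rw [div_le_iff₀ h5]
    nlinarith [mul_nonneg hMq (show (0:ℝ) ≤ (2:ℝ) ^ q - 1/4 by linarith)]
  calc x ^ q ≤ (M / 2) ^ q := h1
    _ = M ^ q / 2 ^ q := h2
    _ ≤ 4 * M ^ q := h6

lemma kl_split {δ H : ℝ} (hδ : 0 < δ) : δ ^ (2 * H) = δ ^ 2 * δ ^ (2 * H - 2) := by
  rw [← Real.rpow_two, ← Real.rpow_add hδ]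
  congr 1; ring

lemma kl_double {δ H : ℝ} (hδ : 0 < δ) (hH : H ≤ 1) :
    (2 * δ) ^ (2 * H) ≤ 4 * δ ^ (2 * H) := by
  rw [Real.mul_rpow (by norm_num) hδ.le]
  have h1 : (2:ℝ) ^ (2 * H) ≤ (2:ℝ) ^ (2:ℝ) :=
    Real.rpow_le_rpow_of_exponent_le one_le_two (by linarith)
  have h2 : (2:ℝ) ^ (2:ℝ) = 4 := by
    rw [Real.rpow_two]; norm_num
  have h3 : 0 ≤ δ ^ (2 * H) := Real.rpow_nonneg hδ.le _
  nlinarith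

lemma kl_pt1 {H η u₁ u₂ s : ℝ} (hH1 : H < 1) (ha : 0 < u₁ - s) (h12 : u₁ ≤ u₂) :
    (η * (u₁ - s) ^ (H - 1/2) - η * (u₂ - s) ^ (H - 1/2)) ^ 2
      ≤ η^2 * (H - 1/2)^2 * (u₂ - u₁)^2 * (u₁ - s) ^ (2*H - 3) := by
  have h := kl_mvt_sq (p := H - 1/2) (by linarith) ha (by linarith : u₁ - s ≤ u₂ - s)
  have e : u₂ - s - (u₁ - s) = u₂ - u₁ := by ring
  rw [e] at h
  have e2 : 2 * (H - 1/2) - 2 = 2*H - 3 := by ring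
  rw [e2] at h
  calc (η * (u₁ - s) ^ (H - 1/2) - η * (u₂ - s) ^ (H - 1/2)) ^ 2
      = η^2 * ((u₁ - s) ^ (H - 1/2) - (u₂ - s) ^ (H - 1/2)) ^ 2 := by ring
    _ ≤ η^2 * ((H - 1/2)^2 * (u₂ - u₁)^2 * (u₁ - s) ^ (2*H - 3)) :=
        mul_le_mul_of_nonneg_left h (sq_nonneg η)
    _ = η^2 * (H - 1/2)^2 * (u₂ - u₁)^2 * (u₁ - s) ^ (2*H - 3) := by ring

lemma kl_pt2 {H η u₁ u₂ s : ℝ} (ha : 0 ≤ u₁ - s) (h12 : u₁ ≤ u₂) :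
    (η * (u₁ - s) ^ (H - 1/2) - η * (u₂ - s) ^ (H - 1/2)) ^ 2
      ≤ 2 * η^2 * ((u₁ - s) ^ (2*H - 1) + (u₂ - s) ^ (2*H - 1)) := by
  have hb : (0:ℝ) ≤ u₂ - s := by linarith
  have e1 : ((u₁ - s) ^ (H - 1/2)) ^ 2 = (u₁ - s) ^ (2*H - 1) := by
    rw [kl_sq_rpow ha]; congr 1; ring
  have e2 : ((u₂ - s) ^ (H - 1/2)) ^ 2 = (u₂ - s) ^ (2*H - 1) := by
    rw [kl_sq_rpow hb]; congr 1; ring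
  nlinarith [sq_nonneg (η * ((u₁ - s) ^ (H - 1/2) + (u₂ - s) ^ (H - 1/2))), e1, e2,
    sq_nonneg (η * (u₁ - s) ^ (H - 1/2) - η * (u₂ - s) ^ (H - 1/2))]

set_option maxHeartbeats 1600000 in
/-- L² Lipschitz-type estimate for slices of the fractional kernel
`K(u,s) = η (u-s)^(H-1/2)`, `H ∈ (0,1)`: there is `c > 0` such that for all
`T ≤ u₁ < u₂`, `‖K(u₁,·) - K(u₂,·)‖_{L²(0,T)} ≤ c (u₂-u₁) (u₂-T)^(H-1)`. -/
theorem kernel_L2_lipschitz (H η T : ℝ) (hH : H ∈ Set.Ioo (0 : ℝ) 1)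
    (hη : 0 < η) (hT : 0 < T) :
    ∃ c > 0, ∀ u₁ u₂ : ℝ, T ≤ u₁ → u₁ < u₂ →
      (∫ s in (0 : ℝ)..T,
          (η * (u₁ - s) ^ (H - 1/2) - η * (u₂ - s) ^ (H - 1/2)) ^ 2) ^ ((1 : ℝ)/2)
        ≤ c * (u₂ - u₁) * (u₂ - T) ^ (H - 1) := by
  obtain ⟨hH0, hH1⟩ := hH
  have hA : (0:ℝ) < 2 - 2*H := by linarith
  have hB : (0:ℝ) < 2*H := by linarith
  have x1 : (0:ℝ) < 1/(2 - 2*H) := by positivity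
  have x2 : (0:ℝ) < 1/(2*H) := by positivity
  set C₀ : ℝ := η^2 * ((H - 1/2)^2 + 10) * (1/(2 - 2*H) + 1/(2*H)) with hC₀def
  have hC₀ : 0 < C₀ := by
    rw [hC₀def]
    apply mul_pos (mul_pos (by positivity) (by positivity)) (by linarith)
  refine ⟨2 * Real.sqrt C₀, by positivity, ?_⟩
  intro u₁ u₂ hTu₁ h12
  have hδ : 0 < u₂ - u₁ := by linarith
  have hM : 0 < u₂ - T := by linarith
  have hm0 : 0 ≤ u₁ - T := by linarith
  have hu₁ : 0 < u₁ := lt_of_lt_of_le hT hTu₁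
  set F : ℝ → ℝ :=
    fun s => (η * (u₁ - s) ^ (H - 1/2) - η * (u₂ - s) ^ (H - 1/2)) ^ 2 with hFdef
  -- integrability infrastructure
  have hGint : ∀ lo hi : ℝ, IntervalIntegrable
      (fun s => 2 * η^2 * ((u₁ - s) ^ (2*H - 1) + (u₂ - s) ^ (2*H - 1))) volume lo hi :=
    fun lo hi =>
      (((kl_ii1 (by linarith) u₁ lo hi).add (kl_ii1 (by linarith) u₂ lo hi)).const_mul _)
  have hFmeas : ∀ lo hi : ℝ, AEStronglyMeasurable F (volume.restrict (Set.uIoc lo hi)) := by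
    intro lo hi
    have m1 : AEStronglyMeasurable (fun s => (u₁ - s) ^ (H - 1/2))
        (volume.restrict (Set.uIoc lo hi)) :=
      (kl_ii1 (by linarith : (-1:ℝ) < H - 1/2) u₁ lo hi).def'.aestronglyMeasurable
    have m2 : AEStronglyMeasurable (fun s => (u₂ - s) ^ (H - 1/2))
        (volume.restrict (Set.uIoc lo hi)) :=
      (kl_ii1 (by linarith : (-1:ℝ) < H - 1/2) u₂ lo hi).def'.aestronglyMeasurable
    have hmm : AEStronglyMeasurable
        (fun s => (η * (u₁ - s) ^ (H - 1/2) - η * (u₂ - s) ^ (H - 1/2))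
          * (η * (u₁ - s) ^ (H - 1/2) - η * (u₂ - s) ^ (H - 1/2)))
        (volume.restrict (Set.uIoc lo hi)) :=
      ((m1.const_mul η).sub (m2.const_mul η)).mul ((m1.const_mul η).sub (m2.const_mul η))
    simpa [hFdef, pow_two] using hmm
  have hFG : ∀ s : ℝ, s ≤ u₁ →
      F s ≤ 2 * η^2 * ((u₁ - s) ^ (2*H - 1) + (u₂ - s) ^ (2*H - 1)) := by
    intro s hs
    simp only [hFdef]
    exact kl_pt2 (by linarith) h12.le
  have hFint : ∀ lo hi : ℝ, lo ≤ hi → hi ≤ u₁ → IntervalIntegrable F volume lo hi := by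
    intro lo hi h1 h2
    refine (hGint lo hi).mono_fun' (hFmeas lo hi) ?_
    refine MeasureTheory.ae_restrict_of_forall_mem measurableSet_uIoc ?_
    intro s hs
    rw [Set.uIoc_of_le h1] at hs
    have hs1 : s ≤ u₁ := le_trans hs.2 h2
    have h0 : 0 ≤ F s := by simp only [hFdef]; exact sq_nonneg _
    show ‖F s‖ ≤ 2 * η^2 * ((u₁ - s) ^ (2*H - 1) + (u₂ - s) ^ (2*H - 1))
    rw [Real.norm_eq_abs, abs_of_nonneg h0]
    exact hFG s hs1
  -- main quadratic bound
  have key2 : (∫ s in (0:ℝ)..T, F s)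
      ≤ 4 * C₀ * (u₂ - u₁)^2 * (u₂ - T) ^ (2*H - 2) := by
    rcases le_or_gt (u₂ - u₁) (u₁ - T) with hcA | hcB
    · -- far case: u₂ - u₁ ≤ u₁ - T
      have hmpos : 0 < u₁ - T := lt_of_lt_of_le hδ hcA
      have hptA : ∀ s ∈ Set.Icc (0:ℝ) T,
          F s ≤ η^2 * (H - 1/2)^2 * (u₂ - u₁)^2 * (u₁ - s) ^ (2*H - 3) := by
        intro s hs
        simp only [hFdef]
        exact kl_pt1 hH1 (by linarith [hs.2]) h12.le
      have hgint : IntervalIntegrable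
          (fun s => η^2 * (H - 1/2)^2 * (u₂ - u₁)^2 * (u₁ - s) ^ (2*H - 3)) volume 0 T :=
        (kl_ii2 _ u₁ 0 T hT.le (by linarith)).const_mul _
      have h1 : (∫ s in (0:ℝ)..T, F s)
          ≤ ∫ s in (0:ℝ)..T, η^2 * (H - 1/2)^2 * (u₂ - u₁)^2 * (u₁ - s) ^ (2*H - 3) :=
        intervalIntegral.integral_mono_on hT.le (hFint 0 T hT.le hTu₁) hgint hptA
      have h2 : (∫ s in (0:ℝ)..T, η^2 * (H - 1/2)^2 * (u₂ - u₁)^2 * (u₁ - s) ^ (2*H - 3))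
          = η^2 * (H - 1/2)^2 * (u₂ - u₁)^2 * ∫ s in (0:ℝ)..T, (u₁ - s) ^ (2*H - 3) :=
        intervalIntegral.integral_const_mul _ _
      have h3 : (∫ s in (0:ℝ)..T, (u₁ - s) ^ (2*H - 3))
          ≤ (u₁ - T) ^ (2*H - 2) * (1/(2 - 2*H)) := by
        rw [kl_subst, sub_zero]
        apply kl_int2' (by linarith) hmpos (by linarith)
        have e : 2*H - 3 + 1 = 2*H - 2 := by ring
        rw [e]
        apply le_of_eq
        field_simp; ring
      have h4 : (u₁ - T) ^ (2*H - 2) ≤ 4 * (u₂ - T) ^ (2*H - 2) :=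
        kl_half hM (by linarith) (by linarith) (by linarith)
      have hcoef : η^2 * (H - 1/2)^2 * (1/(2 - 2*H)) ≤ C₀ := by
        rw [hC₀def]
        nlinarith [mul_nonneg (mul_nonneg (sq_nonneg η) (sq_nonneg (H - 1/2))) x2.le,
          mul_nonneg (sq_nonneg η) x1.le, mul_nonneg (sq_nonneg η) x2.le]
      calc (∫ s in (0:ℝ)..T, F s)
          ≤ η^2 * (H - 1/2)^2 * (u₂ - u₁)^2 * ∫ s in (0:ℝ)..T, (u₁ - s) ^ (2*H - 3) :=
            h1.trans_eq h2
        _ ≤ η^2 * (H - 1/2)^2 * (u₂ - u₁)^2 * ((u₁ - T) ^ (2*H - 2) * (1/(2 - 2*H))) :=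
            mul_le_mul_of_nonneg_left h3 (by positivity)
        _ ≤ η^2 * (H - 1/2)^2 * (u₂ - u₁)^2
              * ((4 * (u₂ - T) ^ (2*H - 2)) * (1/(2 - 2*H))) :=
            mul_le_mul_of_nonneg_left
              (mul_le_mul_of_nonneg_right h4 x1.le) (by positivity)
        _ = (η^2 * (H - 1/2)^2 * (1/(2 - 2*H)))
              * (4 * (u₂ - u₁)^2 * (u₂ - T) ^ (2*H - 2)) := by ring
        _ ≤ C₀ * (4 * (u₂ - u₁)^2 * (u₂ - T) ^ (2*H - 2)) :=
            mul_le_mul_of_nonneg_right hcoef (by positivity)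
        _ = 4 * C₀ * (u₂ - u₁)^2 * (u₂ - T) ^ (2*H - 2) := by ring
    · -- near case: u₁ - T < u₂ - u₁
      have hGbound : ∀ lo : ℝ, 0 ≤ lo → lo ≤ T → u₁ - lo ≤ u₂ - u₁ →
          (∫ s in lo..T, F s) ≤ 10 * η^2 * ((u₂ - u₁) ^ (2*H) * (1/(2*H))) := by
        intro lo hlo hloT hnear
        have hstep : (∫ s in lo..T, F s)
            ≤ ∫ s in lo..T, 2 * η^2 * ((u₁ - s) ^ (2*H - 1) + (u₂ - s) ^ (2*H - 1)) :=
          intervalIntegral.integral_mono_on hloT (hFint lo T hloT hTu₁) (hGint lo T)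
            (fun s hs => hFG s (le_trans hs.2 hTu₁))
        have hsplit : (∫ s in lo..T, 2 * η^2 * ((u₁ - s) ^ (2*H - 1) + (u₂ - s) ^ (2*H - 1)))
            = 2 * η^2 * ((∫ s in lo..T, (u₁ - s) ^ (2*H - 1))
                + ∫ s in lo..T, (u₂ - s) ^ (2*H - 1)) := by
          rw [intervalIntegral.integral_const_mul,
            intervalIntegral.integral_add (kl_ii1 (by linarith) u₁ lo T)
              (kl_ii1 (by linarith) u₂ lo T)]
        have i1 : (∫ s in lo..T, (u₁ - s) ^ (2*H - 1))
            ≤ (u₂ - u₁) ^ (2*H) * (1/(2*H)) := by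
          rw [kl_subst]
          apply kl_int1' (by linarith) hm0 (by linarith) hnear
          have e : 2*H - 1 + 1 = 2*H := by ring
          rw [e]
          apply le_of_eq
          field_simp
        have i2 : (∫ s in lo..T, (u₂ - s) ^ (2*H - 1))
            ≤ 4 * (u₂ - u₁) ^ (2*H) * (1/(2*H)) := by
          rw [kl_subst]
          apply kl_int1' (by linarith) hM.le (by linarith)
            (show u₂ - lo ≤ 2 * (u₂ - u₁) by linarith)
          have e : 2*H - 1 + 1 = 2*H := by ring
          rw [e]
          have e2 : 4 * (u₂ - u₁) ^ (2*H) * (1/(2*H)) * (2*H) = 4 * (u₂ - u₁) ^ (2*H) := by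
            field_simp
          rw [e2]
          exact kl_double hδ hH1.le
        have hfin : 2 * η^2 * ((∫ s in lo..T, (u₁ - s) ^ (2*H - 1))
                + ∫ s in lo..T, (u₂ - s) ^ (2*H - 1))
            ≤ 10 * η^2 * ((u₂ - u₁) ^ (2*H) * (1/(2*H))) := by
          have := mul_le_mul_of_nonneg_left (add_le_add i1 i2)
            (show (0:ℝ) ≤ 2 * η^2 by positivity)
          nlinarith [this]
        calc (∫ s in lo..T, F s)
            ≤ ∫ s in lo..T, 2 * η^2 * ((u₁ - s) ^ (2*H - 1) + (u₂ - s) ^ (2*H - 1)) := hstep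
          _ = 2 * η^2 * ((∫ s in lo..T, (u₁ - s) ^ (2*H - 1))
                + ∫ s in lo..T, (u₂ - s) ^ (2*H - 1)) := hsplit
          _ ≤ 10 * η^2 * ((u₂ - u₁) ^ (2*H) * (1/(2*H))) := hfin
      have main : (∫ s in (0:ℝ)..T, F s) ≤ C₀ * (u₂ - u₁) ^ (2*H) := by
        have hδ2H : (0:ℝ) ≤ (u₂ - u₁) ^ (2*H) := Real.rpow_nonneg hδ.le _
        rcases le_or_gt u₁ (u₂ - u₁) with hB1 | hB2
        · have h := hGbound 0 le_rfl hT.le (by simpa using hB1)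
          have hcoef : 10 * η^2 * (1/(2*H)) ≤ C₀ := by
            rw [hC₀def]
            nlinarith [mul_nonneg (mul_nonneg (sq_nonneg η) (sq_nonneg (H - 1/2))) x1.le,
              mul_nonneg (mul_nonneg (sq_nonneg η) (sq_nonneg (H - 1/2))) x2.le,
              mul_nonneg (sq_nonneg η) x1.le]
          nlinarith [mul_le_mul_of_nonneg_right hcoef hδ2H]
        · set s₀ : ℝ := u₁ - (u₂ - u₁) with hs₀def
          have hs₀0 : 0 < s₀ := by rw [hs₀def]; linarith
          have hs₀T : s₀ ≤ T := by rw [hs₀def]; linarith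
          have hsplitI : (∫ s in (0:ℝ)..T, F s)
              = (∫ s in (0:ℝ)..s₀, F s) + ∫ s in s₀..T, F s :=
            (intervalIntegral.integral_add_adjacent_intervals
              (hFint 0 s₀ hs₀0.le (by rw [hs₀def]; linarith))
              (hFint s₀ T hs₀T hTu₁)).symm
          have hpart1 : (∫ s in (0:ℝ)..s₀, F s)
              ≤ η^2 * (H - 1/2)^2 * (1/(2 - 2*H)) * (u₂ - u₁) ^ (2*H) := by
            have hpt : ∀ s ∈ Set.Icc (0:ℝ) s₀,
                F s ≤ η^2 * (H - 1/2)^2 * (u₂ - u₁)^2 * (u₁ - s) ^ (2*H - 3) := by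
              intro s hs
              simp only [hFdef]
              have : s ≤ s₀ := hs.2
              exact kl_pt1 hH1 (by rw [hs₀def] at this; linarith) h12.le
            have hgint : IntervalIntegrable
                (fun s => η^2 * (H - 1/2)^2 * (u₂ - u₁)^2 * (u₁ - s) ^ (2*H - 3))
                volume 0 s₀ :=
              (kl_ii2 _ u₁ 0 s₀ hs₀0.le (by rw [hs₀def]; linarith)).const_mul _
            have h1 : (∫ s in (0:ℝ)..s₀, F s)
                ≤ ∫ s in (0:ℝ)..s₀, η^2 * (H - 1/2)^2 * (u₂ - u₁)^2 * (u₁ - s) ^ (2*H - 3) :=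
              intervalIntegral.integral_mono_on hs₀0.le
                (hFint 0 s₀ hs₀0.le (by rw [hs₀def]; linarith)) hgint hpt
            have h2 : (∫ s in (0:ℝ)..s₀,
                  η^2 * (H - 1/2)^2 * (u₂ - u₁)^2 * (u₁ - s) ^ (2*H - 3))
                = η^2 * (H - 1/2)^2 * (u₂ - u₁)^2 * ∫ s in (0:ℝ)..s₀, (u₁ - s) ^ (2*H - 3) :=
              intervalIntegral.integral_const_mul _ _
            have h3 : (∫ s in (0:ℝ)..s₀, (u₁ - s) ^ (2*H - 3))
                ≤ (u₂ - u₁) ^ (2*H - 2) * (1/(2 - 2*H)) := by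
              rw [kl_subst, sub_zero]
              have e0 : u₁ - s₀ = u₂ - u₁ := by rw [hs₀def]; ring
              rw [e0]
              apply kl_int2' (by linarith) hδ (by linarith)
              have e : 2*H - 3 + 1 = 2*H - 2 := by ring
              rw [e]
              apply le_of_eq
              field_simp; ring
            have hsp : (u₂ - u₁)^2 * (u₂ - u₁) ^ (2*H - 2) = (u₂ - u₁) ^ (2*H) :=
              (kl_split hδ).symm
            calc (∫ s in (0:ℝ)..s₀, F s)
                ≤ η^2 * (H - 1/2)^2 * (u₂ - u₁)^2 * ∫ s in (0:ℝ)..s₀, (u₁ - s) ^ (2*H - 3) :=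
                  h1.trans_eq h2
              _ ≤ η^2 * (H - 1/2)^2 * (u₂ - u₁)^2
                    * ((u₂ - u₁) ^ (2*H - 2) * (1/(2 - 2*H))) :=
                  mul_le_mul_of_nonneg_left h3 (by positivity)
              _ = η^2 * (H - 1/2)^2 * (1/(2 - 2*H))
                    * ((u₂ - u₁)^2 * (u₂ - u₁) ^ (2*H - 2)) := by ring
              _ = η^2 * (H - 1/2)^2 * (1/(2 - 2*H)) * (u₂ - u₁) ^ (2*H) := by rw [hsp]
          have hpart2 := hGbound s₀ hs₀0.le hs₀T (by rw [hs₀def]; linarith)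
          have hcoef2 : η^2 * (H - 1/2)^2 * (1/(2 - 2*H)) + 10 * η^2 * (1/(2*H)) ≤ C₀ := by
            rw [hC₀def]
            nlinarith [mul_nonneg (mul_nonneg (sq_nonneg η) (sq_nonneg (H - 1/2))) x2.le,
              mul_nonneg (sq_nonneg η) x1.le]
          nlinarith [mul_le_mul_of_nonneg_right hcoef2 hδ2H, hsplitI, hpart1, hpart2]
      calc (∫ s in (0:ℝ)..T, F s)
          ≤ C₀ * (u₂ - u₁) ^ (2*H) := main
        _ = C₀ * ((u₂ - u₁)^2 * (u₂ - u₁) ^ (2*H - 2)) := by rw [← kl_split hδ]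
        _ ≤ C₀ * ((u₂ - u₁)^2 * (4 * (u₂ - T) ^ (2*H - 2))) := by
            apply mul_le_mul_of_nonneg_left
              (mul_le_mul_of_nonneg_left
                (kl_half hM (by linarith) (by linarith) (by linarith)) (by positivity))
              hC₀.le
        _ = 4 * C₀ * (u₂ - u₁)^2 * (u₂ - T) ^ (2*H - 2) := by ring
  -- conclude
  have hI0 : 0 ≤ ∫ s in (0:ℝ)..T, F s :=
    intervalIntegral.integral_nonneg hT.le
      (fun s _ => by simp only [hFdef]; exact sq_nonneg _)
  set X : ℝ := 2 * Real.sqrt C₀ * (u₂ - u₁) * (u₂ - T) ^ (H - 1) with hXdef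
  have hX0 : 0 ≤ X := by rw [hXdef]; positivity
  have hXsq : X^2 = 4 * C₀ * (u₂ - u₁)^2 * (u₂ - T) ^ (2*H - 2) := by
    rw [hXdef]
    have h1 : ((u₂ - T) ^ (H - 1)) ^ 2 = (u₂ - T) ^ (2*H - 2) := by
      rw [kl_sq_rpow hM.le]; congr 1; ring
    have h2 : (Real.sqrt C₀)^2 = C₀ := Real.sq_sqrt hC₀.le
    rw [mul_pow, mul_pow, mul_pow, h1, h2]; ring
  have hstep : (∫ s in (0:ℝ)..T, F s) ^ ((1:ℝ)/2) ≤ (X^2) ^ ((1:ℝ)/2) :=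
    Real.rpow_le_rpow hI0 (by rw [hXsq]; exact key2) (by norm_num)
  refine le_trans hstep (le_of_eq ?_)
  rw [← Real.rpow_two, ← Real.rpow_mul hX0]
  norm_num
end

section
/- With K(u,s) = η(u-s)^{H-1/2}, H ∈ (0,1), there is a constant c_Δ > 0 such that for all T ≤ u₁ < u₂ ≤ T + Δ, |∫_0^T (K(u₁,s)² - K(u₂,s)²) ds| ≤ c_Δ (u₂ - u₁)(u₂ - T)^{H-1}. -/
open Real MeasureTheory

/-- Squaring the fractional kernel: for `0 ≤ x`, `(η x^(H-1/2))² = η² x^(2H-1)`. -/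
lemma kernel_sq_eq (η H : ℝ) {x : ℝ} (hx : 0 ≤ x) :
    (η * x ^ (H - 1/2)) ^ 2 = η ^ 2 * x ^ (2*H - 1) := by
  rw [mul_pow]
  congr 1
  rw [← Real.rpow_natCast (x ^ (H - 1/2)) 2, ← Real.rpow_mul hx]
  norm_num
  ring_nf

/-- MVT bound: if the derivative bound `p * c^(p-1) ≤ M` holds on `[a,b]` with `0 < a`,
then `b^p - a^p ≤ M * (b-a)`. -/
lemma rpow_sub_rpow_le_of_deriv_bound (p : ℝ) {a b M : ℝ} (ha : 0 < a) (hab : a ≤ b)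
    (hM : ∀ c : ℝ, a ≤ c → c ≤ b → p * c ^ (p - 1) ≤ M) :
    b ^ p - a ^ p ≤ M * (b - a) := by
  rcases eq_or_lt_of_le hab with rfl | hab'
  · simp
  have hcont : ContinuousOn (fun x : ℝ => x ^ p) (Set.Icc a b) := by
    apply ContinuousOn.rpow_const continuousOn_id
    intro x hx
    exact Or.inl (ne_of_gt (lt_of_lt_of_le ha hx.1))
  have hderiv : ∀ x ∈ Set.Ioo a b, HasDerivAt (fun x : ℝ => x ^ p) (p * x ^ (p - 1)) x := by
    intro x hx
    have := Real.hasDerivAt_rpow_const (x := x) (p := p) (Or.inl (ne_of_gt (ha.trans hx.1)))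
    simpa [mul_comm] using this
  obtain ⟨c, hc, hceq⟩ := exists_hasDerivAt_eq_slope (fun x : ℝ => x ^ p)
    (fun x => p * x ^ (p - 1)) hab' hcont hderiv
  have hcb : p * c ^ (p - 1) ≤ M := hM c hc.1.le hc.2.le
  have hba : 0 < b - a := by linarith
  have : (b ^ p - a ^ p) / (b - a) ≤ M := hceq ▸ hcb
  calc b ^ p - a ^ p = (b ^ p - a ^ p) / (b - a) * (b - a) := by field_simp
    _ ≤ M * (b - a) := by nlinarith

/-- Lipschitz-type bound for `x ↦ x^(2H)` on `[T, T+Δ]`. -/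
lemma pow_diff_boundA (H T Δ : ℝ) (hH : H ∈ Set.Ioo (0:ℝ) 1) (hT : 0 < T)
    {u₁ u₂ : ℝ} (h1 : T ≤ u₁) (h12 : u₁ ≤ u₂) (h2 : u₂ ≤ T + Δ) :
    u₂ ^ (2*H) - u₁ ^ (2*H) ≤ 2 * max (T ^ (2*H-1)) ((T+Δ) ^ (2*H-1)) * (u₂ - u₁) := by
  obtain ⟨hH0, hH1⟩ := hH
  apply rpow_sub_rpow_le_of_deriv_bound _ (hT.trans_le h1) h12
  intro c hc1 hc2
  have hcpos : 0 < c := hT.trans_le (h1.trans hc1)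
  have hkey : c ^ (2*H - 1) ≤ max (T ^ (2*H-1)) ((T+Δ) ^ (2*H-1)) := by
    rcases le_or_gt 0 (2*H - 1) with hp | hp
    · refine le_trans ?_ (le_max_right _ _)
      exact Real.rpow_le_rpow hcpos.le (by linarith) hp
    · refine le_trans ?_ (le_max_left _ _)
      exact Real.rpow_le_rpow_of_nonpos hT (h1.trans hc1) hp.le
  have hnn : 0 ≤ c ^ (2*H - 1) := Real.rpow_nonneg hcpos.le _
  rw [show (2:ℝ)*H = (2*H - 1) + 1 by ring]
  simp only [add_sub_cancel_right]
  nlinarith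

/-- Bound for `x ↦ x^(2H)` near zero: `b^(2H) - a^(2H) ≤ 4 Δ^H b^(H-1) (b-a)`. -/
lemma pow_diff_boundB (H Δ : ℝ) (hH : H ∈ Set.Ioo (0:ℝ) 1) (hΔ : 0 < Δ) {a b : ℝ}
    (ha : 0 ≤ a) (hab : a < b) (hbΔ : b ≤ Δ) :
    b ^ (2*H) - a ^ (2*H) ≤ 4 * Δ ^ H * b ^ (H-1) * (b - a) := by
  obtain ⟨hH0, hH1⟩ := hH
  have hb : 0 < b := ha.trans_lt hab
  have hbH : b ^ H ≤ Δ ^ H := Real.rpow_le_rpow hb.le hbΔ hH0.le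
  have hbH1 : 0 < b ^ (H-1) := Real.rpow_pos_of_pos hb _
  have hbsplit : b ^ (2*H - 1) = b ^ H * b ^ (H - 1) := by
    rw [← Real.rpow_add hb]; ring_nf
  rcases le_or_gt a (b/2) with hhalf | hhalf
  · have hba : b ≤ 2 * (b - a) := by linarith
    have ha2H : 0 ≤ a ^ (2*H) := Real.rpow_nonneg ha _
    have hbdecomp : b ^ (2*H) = b * b ^ (2*H - 1) := by
      have h := Real.rpow_add hb 1 (2*H-1)
      rw [Real.rpow_one] at h
      rw [← h]; ring_nf
    have h1 : b ^ (2*H - 1) ≤ Δ ^ H * b ^ (H-1) := by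
      rw [hbsplit]; exact mul_le_mul_of_nonneg_right hbH hbH1.le
    have h2 : 0 ≤ b ^ (2*H-1) := Real.rpow_nonneg hb.le _
    nlinarith [Real.rpow_pos_of_pos hb (2*H-1)]
  · apply rpow_sub_rpow_le_of_deriv_bound _ (by linarith : (0:ℝ) < a) hab.le
    intro c hc1 hc2
    have hcpos : 0 < c := by linarith
    have hkey : c ^ (2*H - 1) ≤ 2 * b ^ (2*H - 1) := by
      rcases le_or_gt 0 (2*H - 1) with hp | hp
      · have := Real.rpow_le_rpow hcpos.le hc2 hp
        nlinarith [Real.rpow_nonneg hb.le (2*H-1)]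
      · have h3 : c ^ (2*H-1) ≤ (b/2) ^ (2*H-1) :=
          Real.rpow_le_rpow_of_nonpos (by linarith) (by linarith) hp.le
        have h4 : (b/2) ^ (2*H-1) = b ^ (2*H-1) / 2 ^ (2*H-1) :=
          Real.div_rpow hb.le (by norm_num) _
        have h5 : (1:ℝ)/2 ≤ 2 ^ (2*H-1) := by
          have := Real.rpow_le_rpow_of_exponent_le (by norm_num : (1:ℝ) ≤ 2)
            (by linarith : (-1:ℝ) ≤ 2*H-1)
          simpa [Real.rpow_neg_one] using this
        have h6 : 0 < (2:ℝ) ^ (2*H-1) := Real.rpow_pos_of_pos (by norm_num) _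
        have h7 : 0 ≤ b ^ (2*H-1) := Real.rpow_nonneg hb.le _
        have h8 : b ^ (2*H-1) / 2 ^ (2*H-1) ≤ 2 * b ^ (2*H-1) := by
          rw [div_le_iff₀ h6]; nlinarith
        rw [h4] at h3
        linarith
    have hnn : 0 ≤ c ^ (2*H - 1) := Real.rpow_nonneg hcpos.le _
    have hfin : 2 * H * c ^ (2*H - 1) ≤ 4 * Δ ^ H * b ^ (H-1) := by
      nlinarith [mul_le_mul_of_nonneg_right hbH hbH1.le,
        Real.rpow_nonneg hb.le (2*H-1)]
    simpa using hfin

/-- Explicit value of the integral of the squared fractional kernel. -/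
lemma integral_kernel_sq (H η T u : ℝ) (hH : 0 < H) (hT : 0 ≤ T) (hu : T ≤ u) :
    ∫ s in (0:ℝ)..T, (η * (u - s) ^ (H - 1/2)) ^ 2
      = η ^ 2 * ((u ^ (2*H) - (u - T) ^ (2*H)) / (2*H)) := by
  have h1 : ∀ s ∈ Set.uIcc (0:ℝ) T, (η * (u - s) ^ (H - 1/2)) ^ 2
      = η ^ 2 * (u - s) ^ (2*H - 1) := by
    intro s hs
    rw [Set.uIcc_of_le hT] at hs
    exact kernel_sq_eq η H (by linarith [hs.2])
  rw [intervalIntegral.integral_congr h1, intervalIntegral.integral_const_mul]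
  have h2 : (∫ s in (0:ℝ)..T, (u - s) ^ (2*H - 1))
      = ∫ x in (u - T)..(u - 0), x ^ (2*H - 1) :=
    intervalIntegral.integral_comp_sub_left (fun x => x ^ (2*H - 1)) u
  rw [h2, integral_rpow (Or.inl (by linarith))]
  norm_num

/-- Integrability of the squared fractional kernel. -/
lemma kernel_sq_integrable (H η T u : ℝ) (hH : 0 < H) (hT : 0 < T) (hu : T ≤ u) :
    IntervalIntegrable (fun s => (η * (u - s) ^ (H - 1/2)) ^ 2) volume 0 T := by
  have base : IntervalIntegrable (fun x : ℝ => x ^ (2*H - 1)) volume (u - T) (u - 0) :=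
    intervalIntegral.intervalIntegrable_rpow' (by linarith)
  have comp := base.comp_sub_left u
  simp only [sub_sub_cancel, sub_self, sub_zero] at comp
  have comp' : IntervalIntegrable (fun s : ℝ => η ^ 2 * (u - s) ^ (2*H - 1)) volume 0 T :=
    (comp.symm).const_mul _
  apply comp'.congr_ae
  refine Filter.eventuallyEq_of_mem (self_mem_ae_restrict measurableSet_uIoc) ?_
  intro s hs
  rw [Set.uIoc_of_le hT.le] at hs
  exact (kernel_sq_eq η H (by linarith [hs.2])).symm

/-- Estimate for the difference of squared fractional kernels: there is `c_Δ > 0`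
such that for all `T ≤ u₁ < u₂ ≤ T + Δ`,
`|∫_0^T (K(u₁,s)² - K(u₂,s)²) ds| ≤ c_Δ (u₂-u₁)(u₂-T)^(H-1)`. -/
theorem kernel_sq_diff_estimate (H η T Δ : ℝ) (hH : H ∈ Set.Ioo (0 : ℝ) 1)
    (hη : 0 < η) (hT : 0 < T) (hΔ : 0 < Δ) :
    ∃ c > 0, ∀ u₁ u₂ : ℝ, T ≤ u₁ → u₁ < u₂ → u₂ ≤ T + Δ →
      |∫ s in (0 : ℝ)..T,
          ((η * (u₁ - s) ^ (H - 1/2)) ^ 2 - (η * (u₂ - s) ^ (H - 1/2)) ^ 2)|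
        ≤ c * (u₂ - u₁) * (u₂ - T) ^ (H - 1) := by
  obtain ⟨hH0, hH1⟩ := hH
  set M : ℝ := max (T ^ (2*H-1)) ((T+Δ) ^ (2*H-1)) with hM_def
  have hM : 0 < M := lt_of_lt_of_le (Real.rpow_pos_of_pos hT _) (le_max_left _ _)
  set c : ℝ := η ^ 2 / (2*H) * (2 * M * Δ ^ (1-H) + 4 * Δ ^ H) with hc_def
  have hc : 0 < c := by
    apply mul_pos (div_pos (by positivity) (by linarith))
    have := Real.rpow_pos_of_pos hΔ (1-H)
    have := Real.rpow_pos_of_pos hΔ H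
    nlinarith
  refine ⟨c, hc, fun u₁ u₂ h1 h12 h2 => ?_⟩
  have hu1 : T ≤ u₁ := h1
  have hu2 : T ≤ u₂ := h1.trans h12.le
  have hi1 := kernel_sq_integrable H η T u₁ hH0 hT hu1
  have hi2 := kernel_sq_integrable H η T u₂ hH0 hT hu2
  rw [intervalIntegral.integral_sub hi1 hi2,
    integral_kernel_sq H η T u₁ hH0 hT.le hu1,
    integral_kernel_sq H η T u₂ hH0 hT.le hu2]
  set A : ℝ := u₂ ^ (2*H) - u₁ ^ (2*H) with hA_def
  set B : ℝ := (u₂ - T) ^ (2*H) - (u₁ - T) ^ (2*H) with hB_def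
  have hA0 : 0 ≤ A := by
    have := Real.rpow_le_rpow (hT.trans_le hu1).le h12.le (by linarith : (0:ℝ) ≤ 2*H)
    simp only [hA_def]; linarith
  have hB0 : 0 ≤ B := by
    have := Real.rpow_le_rpow (by linarith : (0:ℝ) ≤ u₁ - T) (by linarith : u₁ - T ≤ u₂ - T)
      (by linarith : (0:ℝ) ≤ 2*H)
    simp only [hB_def]; linarith
  have hAbound : A ≤ 2 * M * (u₂ - u₁) :=
    pow_diff_boundA H T Δ ⟨hH0, hH1⟩ hT hu1 h12.le h2
  have hBbound : B ≤ 4 * Δ ^ H * (u₂ - T) ^ (H-1) * (u₂ - u₁) := by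
    have := pow_diff_boundB H Δ ⟨hH0, hH1⟩ hΔ (a := u₁ - T) (b := u₂ - T)
      (by linarith) (by linarith) (by linarith)
    simpa [hB_def] using this
  have heq : η ^ 2 * ((u₁ ^ (2*H) - (u₁ - T) ^ (2*H)) / (2*H))
      - η ^ 2 * ((u₂ ^ (2*H) - (u₂ - T) ^ (2*H)) / (2*H))
      = η ^ 2 / (2*H) * (B - A) := by
    simp only [hA_def, hB_def]; field_simp; ring
  rw [heq, abs_mul, abs_of_pos (by positivity : (0:ℝ) < η ^ 2 / (2*H))]
  have habs : |B - A| ≤ A + B := by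
    rw [abs_sub_comm]
    calc |A - B| ≤ |A| + |B| := abs_sub _ _
      _ = A + B := by rw [abs_of_nonneg hA0, abs_of_nonneg hB0]
  have hone : 1 ≤ Δ ^ (1-H) * (u₂ - T) ^ (H-1) := by
    have h9 : Δ ^ (H-1) ≤ (u₂ - T) ^ (H-1) :=
      Real.rpow_le_rpow_of_nonpos (by linarith) (by linarith) (by linarith)
    have h10 : Δ ^ (1-H) * Δ ^ (H-1) = 1 := by
      rw [← Real.rpow_add hΔ]; norm_num
    have h11 : 0 < Δ ^ (1-H) := Real.rpow_pos_of_pos hΔ _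
    nlinarith
  have hΔH : 0 < Δ ^ H := Real.rpow_pos_of_pos hΔ _
  have huT : 0 < (u₂ - T) ^ (H-1) := Real.rpow_pos_of_pos (by linarith) _
  have hsum : A + B ≤ (2 * M * Δ ^ (1-H) + 4 * Δ ^ H) * (u₂ - u₁) * (u₂ - T) ^ (H-1) := by
    have hA2 : A ≤ 2 * M * Δ ^ (1-H) * (u₂ - u₁) * (u₂ - T) ^ (H-1) := by
      have h12' : 0 ≤ u₂ - u₁ := by linarith
      nlinarith
    nlinarith
  calc η ^ 2 / (2*H) * |B - A| ≤ η ^ 2 / (2*H) * (A + B) := by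
        apply mul_le_mul_of_nonneg_left habs (by positivity)
    _ ≤ η ^ 2 / (2*H) * ((2 * M * Δ ^ (1-H) + 4 * Δ ^ H) * (u₂ - u₁) * (u₂ - T) ^ (H-1)) := by
        apply mul_le_mul_of_nonneg_left hsum (by positivity)
    _ = c * (u₂ - u₁) * (u₂ - T) ^ (H-1) := by rw [hc_def]; ring
end

section
/- With K(u,s) = η(u-s)^{H-1/2}, H ∈ (0,1), there is a constant c > 0 such that for all T ≤ u₁ ≤ u₂ < u₃, (∫_0^T (K(u₂,s) - ((u₃-u₂)/(u₃-u₁))K(u₁,s) - ((u₂-u₁)/(u₃-u₁))K(u₃,s))² ds)^{1/2} ≤ c(u₃-u₁)²(u₃-T)^{H-2}. -/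
open Real MeasureTheory Set

private lemma rpow_sq {x : ℝ} (hx : 0 ≤ x) (a : ℝ) : (x ^ a) ^ 2 = x ^ (2 * a) := by
  rw [← Real.rpow_natCast (x ^ a) 2, ← Real.rpow_mul hx]
  norm_num [mul_comm]

private lemma hasDerivAt_shift (s c : ℝ) {t : ℝ} (h : s < t) :
    HasDerivAt (fun x : ℝ => (x - s) ^ c) (c * (t - s) ^ (c - 1)) t := by
  have h1 : HasDerivAt (fun x : ℝ => x - s) 1 t := (hasDerivAt_id t).sub_const s
  have h2 := h1.rpow_const (p := c) (Or.inl (sub_ne_zero.mpr h.ne'))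
  simpa using h2

private lemma intInt_shift {q : ℝ} (hq : -1 < q) (u A B : ℝ) :
    IntervalIntegrable (fun s : ℝ => (u - s) ^ q) volume A B := by
  have h := (intervalIntegral.intervalIntegrable_rpow' hq (a := u - A) (b := u - B)).comp_sub_left u
  simpa using h

private lemma intInt_cont {u A B q : ℝ} (hAB : A ≤ B) (hBu : B < u) :
    IntervalIntegrable (fun s : ℝ => (u - s) ^ q) volume A B := by
  apply ContinuousOn.intervalIntegrable
  apply ContinuousOn.rpow_const
  · exact (continuous_const.sub continuous_id).continuousOn
  · intro x hx
    rw [Set.uIcc_of_le hAB] at hx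
    have : 0 < u - x := by linarith [hx.2]
    exact Or.inl this.ne'

private lemma integral_shift_rpow_le_neg {u A B q : ℝ} (hAB : A ≤ B) (hBu : B < u) (hq : q < -1) :
    ∫ s in A..B, (u - s) ^ q ≤ (u - B) ^ (q + 1) / (-(q + 1)) := by
  have hq1 : q + 1 < 0 := by linarith
  have hne : q + 1 ≠ 0 := ne_of_lt hq1
  have hderiv : ∀ x ∈ Set.uIcc A B,
      HasDerivAt (fun s : ℝ => (u - s) ^ (q + 1) / (-(q + 1))) ((u - x) ^ q) x := by
    intro x hx
    rw [Set.uIcc_of_le hAB] at hx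
    have hxu : 0 < u - x := by linarith [hx.2]
    have h1 : HasDerivAt (fun s : ℝ => u - s) (-1) x := by
      simpa using (hasDerivAt_id x).const_sub u
    have h2 := (h1.rpow_const (p := q + 1) (Or.inl hxu.ne')).div_const (-(q + 1))
    refine h2.congr_deriv ?_
    rw [show q + 1 - 1 = q by ring, div_eq_iff (neg_ne_zero.mpr hne)]
    ring
  rw [intervalIntegral.integral_eq_sub_of_hasDerivAt hderiv (intInt_cont hAB hBu)]
  have h0 : 0 ≤ (u - A) ^ (q + 1) / (-(q + 1)) :=
    div_nonneg (Real.rpow_nonneg (by linarith) _) (by linarith)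
  linarith

private lemma integral_shift_rpow_le_pos {u A B q : ℝ} (hAB : A ≤ B) (hBu : B ≤ u) (hq : -1 < q) :
    ∫ s in A..B, (u - s) ^ q ≤ (u - A) ^ (q + 1) / (q + 1) := by
  have h0 : (∫ s in A..B, (u - s) ^ q) = ∫ x in (u - B)..(u - A), x ^ q :=
    intervalIntegral.integral_comp_sub_left (fun x => x ^ q) u
  rw [h0, integral_rpow (Or.inl hq), sub_div]
  have h1 : 0 ≤ (u - B) ^ (q + 1) := Real.rpow_nonneg (by linarith) _
  have h2 : 0 < q + 1 := by linarith
  exact sub_le_self _ (div_nonneg h1 h2.le)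

private lemma pow_two_h_le {H x X : ℝ} (hH0 : 0 < H) (hH1 : H < 1) (hx : 0 < x) (hX : 0 < X)
    (hXx : X ≤ 2 * x) : x ^ (2 * H - 4) ≤ 16 * X ^ (2 * H - 4) := by
  have h1 : (2 * x) ^ (2 * H - 4) ≤ X ^ (2 * H - 4) :=
    Real.rpow_le_rpow_of_nonpos hX hXx (by linarith)
  have h2 : ((2 : ℝ) * x) ^ (2 * H - 4) = 2 ^ (2 * H - 4) * x ^ (2 * H - 4) :=
    Real.mul_rpow (by norm_num) hx.le
  have key : x ^ (2 * H - 4) = 2 ^ (4 - 2 * H) * (2 * x) ^ (2 * H - 4) := by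
    rw [h2, ← mul_assoc, ← Real.rpow_add (by norm_num : (0:ℝ) < 2),
      show (4 - 2 * H) + (2 * H - 4) = 0 by ring, Real.rpow_zero, one_mul]
  have h4 : (2 : ℝ) ^ (4 - 2 * H) ≤ 16 := by
    calc (2 : ℝ) ^ (4 - 2 * H) ≤ 2 ^ ((4 : ℝ)) :=
          Real.rpow_le_rpow_of_exponent_le one_le_two (by linarith)
      _ = 16 := by
          rw [show (4 : ℝ) = ((4 : ℕ) : ℝ) by norm_num, Real.rpow_natCast]; norm_num
  calc x ^ (2 * H - 4) = 2 ^ (4 - 2 * H) * (2 * x) ^ (2 * H - 4) := key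
    _ ≤ 16 * X ^ (2 * H - 4) :=
        mul_le_mul h4 h1 (Real.rpow_nonneg (by linarith) _) (by norm_num)

private lemma smooth_abs {H η s u₁ u₂ u₃ : ℝ} (hH0 : 0 < H) (hH1 : H < 1) (hη : 0 < η)
    (hs : s < u₁) (h12 : u₁ < u₂) (h23 : u₂ < u₃) :
    |η * (u₂ - s) ^ (H - 1/2)
      - ((u₃ - u₂)/(u₃ - u₁)) * (η * (u₁ - s) ^ (H - 1/2))
      - ((u₂ - u₁)/(u₃ - u₁)) * (η * (u₃ - s) ^ (H - 1/2))|
    ≤ η * (u₃ - u₁) ^ 2 * (u₁ - s) ^ (H - 5/2) := by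
  have hδ : 0 < u₃ - u₁ := by linarith
  have hne : u₃ - u₁ ≠ 0 := hδ.ne'
  set f : ℝ → ℝ := fun t => η * (t - s) ^ (H - 1/2) with hf
  set g : ℝ → ℝ := fun t => η * ((H - 1/2) * (t - s) ^ (H - 3/2)) with hg
  set g' : ℝ → ℝ := fun t => η * ((H - 1/2) * ((H - 3/2) * (t - s) ^ (H - 5/2))) with hg'
  have hfd : ∀ t, s < t → HasDerivAt f (g t) t := by
    intro t ht
    have h0 := (hasDerivAt_shift s (H - 1/2) ht).const_mul η
    rw [show H - 1/2 - 1 = H - 3/2 by ring] at h0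
    simpa [hf, hg, mul_assoc] using h0
  have hgd : ∀ t, s < t → HasDerivAt g (g' t) t := by
    intro t ht
    have h0 := (hasDerivAt_shift s (H - 3/2) ht).const_mul (η * (H - 1/2))
    rw [show H - 3/2 - 1 = H - 5/2 by ring] at h0
    have h1 : (fun x : ℝ => η * (H - 1/2) * (x - s) ^ (H - 3/2)) = g := by
      funext x; rw [hg]; ring
    rw [h1] at h0
    refine h0.congr_deriv ?_
    rw [hg']; ring
  have hfc : ∀ A B : ℝ, s < A → ContinuousOn f (Icc A B) := by
    intro A B hA
    intro t ht
    exact ((hfd t (lt_of_lt_of_le hA ht.1)).continuousAt).continuousWithinAt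
  have hgc : ∀ A B : ℝ, s < A → ContinuousOn g (Icc A B) := by
    intro A B hA
    intro t ht
    exact ((hgd t (lt_of_lt_of_le hA ht.1)).continuousAt).continuousWithinAt
  obtain ⟨ξ₁, hξ₁, hs₁⟩ := exists_hasDerivAt_eq_slope f g h12 (hfc u₁ u₂ hs)
    (fun x hx => hfd x (lt_trans hs hx.1))
  obtain ⟨ξ₂, hξ₂, hs₂⟩ := exists_hasDerivAt_eq_slope f g h23 (hfc u₂ u₃ (lt_trans hs h12))
    (fun x hx => hfd x (lt_trans (lt_trans hs h12) hx.1))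
  have hs₁' : f u₂ - f u₁ = g ξ₁ * (u₂ - u₁) := by
    rw [hs₁, div_mul_cancel₀ _ (sub_ne_zero.mpr h12.ne')]
  have hs₂' : f u₃ - f u₂ = g ξ₂ * (u₃ - u₂) := by
    rw [hs₂, div_mul_cancel₀ _ (sub_ne_zero.mpr h23.ne')]
  have hξξ : ξ₁ < ξ₂ := lt_trans hξ₁.2 hξ₂.1
  have hsξ₁ : s < ξ₁ := lt_trans hs hξ₁.1
  obtain ⟨ζ, hζ, hs₃⟩ := exists_hasDerivAt_eq_slope g g' hξξ (hgc ξ₁ ξ₂ hsξ₁)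
    (fun x hx => hgd x (lt_trans hsξ₁ hx.1))
  have hs₃' : g ξ₂ - g ξ₁ = g' ζ * (ξ₂ - ξ₁) := by
    rw [hs₃, div_mul_cancel₀ _ (sub_ne_zero.mpr hξξ.ne')]
  -- rewrite the target expression
  show |f u₂ - ((u₃ - u₂)/(u₃ - u₁)) * f u₁ - ((u₂ - u₁)/(u₃ - u₁)) * f u₃|
      ≤ η * (u₃ - u₁) ^ 2 * (u₁ - s) ^ (H - 5/2)
  have hXeq : f u₂ - ((u₃ - u₂)/(u₃ - u₁)) * f u₁ - ((u₂ - u₁)/(u₃ - u₁)) * f u₃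
      = ((u₃ - u₂) * (u₂ - u₁) / (u₃ - u₁)) * (-(g' ζ * (ξ₂ - ξ₁))) := by
    rw [show (-(g' ζ * (ξ₂ - ξ₁))) = -(g ξ₂ - g ξ₁) by rw [hs₃']]
    conv_rhs => rw [div_mul_eq_mul_div]
    rw [eq_div_iff hne]
    field_simp
    linear_combination ((u₃ - u₂) * hs₁' - (u₂ - u₁) * hs₂')
  rw [hXeq]
  -- bounds
  have hP0 : 0 ≤ (u₃ - u₂) * (u₂ - u₁) / (u₃ - u₁) :=
    div_nonneg (mul_nonneg (by linarith) (by linarith)) hδ.le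
  have hP1 : (u₃ - u₂) * (u₂ - u₁) / (u₃ - u₁) ≤ u₃ - u₁ := by
    rw [div_le_iff₀ hδ]
    nlinarith
  have hA0 : (0:ℝ) < u₁ - s := by linarith
  have hA : 0 ≤ (u₁ - s) ^ (H - 5/2) := Real.rpow_nonneg hA0.le _
  have hgz : |g' ζ| ≤ η * (u₁ - s) ^ (H - 5/2) := by
    have hζs : 0 < ζ - s := by linarith [hζ.1, hξ₁.1]
    have hmono : (ζ - s) ^ (H - 5/2) ≤ (u₁ - s) ^ (H - 5/2) :=
      Real.rpow_le_rpow_of_nonpos hA0 (by linarith [hζ.1, hξ₁.1]) (by linarith)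
    have hz : 0 ≤ (ζ - s) ^ (H - 5/2) := Real.rpow_nonneg hζs.le _
    have h1 : |H - 1/2| ≤ 1/2 := abs_le.mpr ⟨by linarith, by linarith⟩
    have h2 : |H - 3/2| ≤ 3/2 := abs_le.mpr ⟨by linarith, by linarith⟩
    have : |g' ζ| = η * (|H - 1/2| * (|H - 3/2| * (ζ - s) ^ (H - 5/2))) := by
      rw [hg']
      rw [abs_mul, abs_mul, abs_mul, abs_of_nonneg hη.le, abs_of_nonneg hz]
    rw [this]
    calc η * (|H - 1/2| * (|H - 3/2| * (ζ - s) ^ (H - 5/2)))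
        ≤ η * ((1/2) * ((3/2) * (u₁ - s) ^ (H - 5/2))) := by
          apply mul_le_mul_of_nonneg_left _ hη.le
          apply mul_le_mul h1 _ (by positivity) (by norm_num)
          exact mul_le_mul h2 hmono hz (by norm_num)
      _ ≤ η * (u₁ - s) ^ (H - 5/2) := by nlinarith
  have hξd : ξ₂ - ξ₁ ≤ u₃ - u₁ := by linarith [hξ₁.1, hξ₂.2]
  have hξd0 : 0 ≤ ξ₂ - ξ₁ := by linarith
  rw [abs_mul, abs_neg, abs_mul, abs_of_nonneg hP0, abs_of_nonneg hξd0]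
  calc (u₃ - u₂) * (u₂ - u₁) / (u₃ - u₁) * (|g' ζ| * (ξ₂ - ξ₁))
      ≤ (u₃ - u₁) * ((η * (u₁ - s) ^ (H - 5/2)) * (u₃ - u₁)) := by
        apply mul_le_mul hP1 _ (mul_nonneg (abs_nonneg _) hξd0) hδ.le
        exact mul_le_mul hgz hξd hξd0 (by positivity)
    _ = η * (u₃ - u₁) ^ 2 * (u₁ - s) ^ (H - 5/2) := by ring

private lemma crude_sq {H η s u₁ u₂ u₃ : ℝ} (hη : 0 < η)
    (hs : s ≤ u₁) (h12 : u₁ ≤ u₂) (h23 : u₂ < u₃) :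
    (η * (u₂ - s) ^ (H - 1/2)
      - ((u₃ - u₂)/(u₃ - u₁)) * (η * (u₁ - s) ^ (H - 1/2))
      - ((u₂ - u₁)/(u₃ - u₁)) * (η * (u₃ - s) ^ (H - 1/2))) ^ 2
    ≤ 3 * η ^ 2 * ((u₁ - s) ^ (2*H - 1) + (u₂ - s) ^ (2*H - 1) + (u₃ - s) ^ (2*H - 1)) := by
  have hδ : 0 < u₃ - u₁ := by linarith
  set a := (u₁ - s) ^ (H - 1/2) with ha'
  set b := (u₂ - s) ^ (H - 1/2) with hb'
  set cc := (u₃ - s) ^ (H - 1/2) with hc'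
  have ha : 0 ≤ a := Real.rpow_nonneg (by linarith) _
  have hb : 0 ≤ b := Real.rpow_nonneg (by linarith) _
  have hc : 0 ≤ cc := Real.rpow_nonneg (by linarith) _
  have hl0 : 0 ≤ (u₃ - u₂)/(u₃ - u₁) := div_nonneg (by linarith) hδ.le
  have hl1 : (u₃ - u₂)/(u₃ - u₁) ≤ 1 := by
    rw [div_le_one hδ]; linarith
  have hm0 : 0 ≤ (u₂ - u₁)/(u₃ - u₁) := div_nonneg (by linarith) hδ.le
  have hm1 : (u₂ - u₁)/(u₃ - u₁) ≤ 1 := by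
    rw [div_le_one hδ]; linarith
  have habs : |η * b - ((u₃ - u₂)/(u₃ - u₁)) * (η * a) - ((u₂ - u₁)/(u₃ - u₁)) * (η * cc)|
      ≤ η * a + η * b + η * cc := by
    have h1 : |η * b - ((u₃ - u₂)/(u₃ - u₁)) * (η * a) - ((u₂ - u₁)/(u₃ - u₁)) * (η * cc)|
        ≤ |η * b| + |((u₃ - u₂)/(u₃ - u₁)) * (η * a)| + |((u₂ - u₁)/(u₃ - u₁)) * (η * cc)| := by
      calc |η * b - ((u₃ - u₂)/(u₃ - u₁)) * (η * a) - ((u₂ - u₁)/(u₃ - u₁)) * (η * cc)|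
          = |η * b + (-(((u₃ - u₂)/(u₃ - u₁)) * (η * a))) + (-(((u₂ - u₁)/(u₃ - u₁)) * (η * cc)))| := by
            ring_nf
        _ ≤ |η * b| + |-(((u₃ - u₂)/(u₃ - u₁)) * (η * a))| + |-(((u₂ - u₁)/(u₃ - u₁)) * (η * cc))| :=
            abs_add_three _ _ _
        _ = |η * b| + |((u₃ - u₂)/(u₃ - u₁)) * (η * a)| + |((u₂ - u₁)/(u₃ - u₁)) * (η * cc)| := by
            rw [abs_neg, abs_neg]
    have h2 : |η * b| = η * b := abs_of_nonneg (by positivity)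
    have h3 : |((u₃ - u₂)/(u₃ - u₁)) * (η * a)| ≤ η * a := by
      rw [abs_of_nonneg (by positivity)]
      exact mul_le_of_le_one_left (by positivity) hl1
    have h4 : |((u₂ - u₁)/(u₃ - u₁)) * (η * cc)| ≤ η * cc := by
      rw [abs_of_nonneg (by positivity)]
      exact mul_le_of_le_one_left (by positivity) hm1
    linarith
  have hsq : (η * b - ((u₃ - u₂)/(u₃ - u₁)) * (η * a) - ((u₂ - u₁)/(u₃ - u₁)) * (η * cc)) ^ 2
      ≤ (η * a + η * b + η * cc) ^ 2 := by
    rw [← sq_abs]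
    exact pow_le_pow_left₀ (abs_nonneg _) habs 2
  have hea : a ^ 2 = (u₁ - s) ^ (2*H - 1) := by
    rw [ha', rpow_sq (by linarith : (0:ℝ) ≤ u₁ - s), show 2*(H - 1/2) = 2*H - 1 by ring]
  have heb : b ^ 2 = (u₂ - s) ^ (2*H - 1) := by
    rw [hb', rpow_sq (by linarith : (0:ℝ) ≤ u₂ - s), show 2*(H - 1/2) = 2*H - 1 by ring]
  have hec : cc ^ 2 = (u₃ - s) ^ (2*H - 1) := by
    rw [hc', rpow_sq (by linarith : (0:ℝ) ≤ u₃ - s), show 2*(H - 1/2) = 2*H - 1 by ring]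
  have h3 : (η * a + η * b + η * cc) ^ 2 ≤ 3 * η ^ 2 * (a ^ 2 + b ^ 2 + cc ^ 2) := by
    nlinarith [mul_nonneg (sq_nonneg η) (sq_nonneg (a - b)),
      mul_nonneg (sq_nonneg η) (sq_nonneg (b - cc)),
      mul_nonneg (sq_nonneg η) (sq_nonneg (a - cc))]
  calc (η * b - ((u₃ - u₂)/(u₃ - u₁)) * (η * a) - ((u₂ - u₁)/(u₃ - u₁)) * (η * cc)) ^ 2
      ≤ (η * a + η * b + η * cc) ^ 2 := hsq
    _ ≤ 3 * η ^ 2 * (a ^ 2 + b ^ 2 + cc ^ 2) := h3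
    _ = 3 * η ^ 2 * ((u₁ - s) ^ (2*H - 1) + (u₂ - s) ^ (2*H - 1) + (u₃ - s) ^ (2*H - 1)) := by
        rw [hea, heb, hec]


private lemma smooth_sq {H η s u₁ u₂ u₃ : ℝ} (hH0 : 0 < H) (hH1 : H < 1) (hη : 0 < η)
    (hs : s < u₁) (h12 : u₁ < u₂) (h23 : u₂ < u₃) :
    (η * (u₂ - s) ^ (H - 1/2)
      - ((u₃ - u₂)/(u₃ - u₁)) * (η * (u₁ - s) ^ (H - 1/2))
      - ((u₂ - u₁)/(u₃ - u₁)) * (η * (u₃ - s) ^ (H - 1/2))) ^ 2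
    ≤ η ^ 2 * (u₃ - u₁) ^ 4 * (u₁ - s) ^ (2*H - 5) := by
  have habs := smooth_abs hH0 hH1 hη hs h12 h23
  have h0 : (0:ℝ) ≤ u₁ - s := by linarith
  calc (η * (u₂ - s) ^ (H - 1/2)
      - ((u₃ - u₂)/(u₃ - u₁)) * (η * (u₁ - s) ^ (H - 1/2))
      - ((u₂ - u₁)/(u₃ - u₁)) * (η * (u₃ - s) ^ (H - 1/2))) ^ 2
      = |η * (u₂ - s) ^ (H - 1/2)
      - ((u₃ - u₂)/(u₃ - u₁)) * (η * (u₁ - s) ^ (H - 1/2))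
      - ((u₂ - u₁)/(u₃ - u₁)) * (η * (u₃ - s) ^ (H - 1/2))| ^ 2 := (sq_abs _).symm
    _ ≤ (η * (u₃ - u₁) ^ 2 * (u₁ - s) ^ (H - 5/2)) ^ 2 :=
        pow_le_pow_left₀ (abs_nonneg _) habs 2
    _ = η ^ 2 * (u₃ - u₁) ^ 4 * (u₁ - s) ^ (2*H - 5) := by
        rw [mul_pow, mul_pow, rpow_sq h0, show 2*(H - 5/2) = 2*H - 5 by ring, ← pow_mul]

set_option maxHeartbeats 1600000 in
open intervalIntegral in
/-- Second-order (linear interpolation) L² error estimate for the fractional kernel: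
there is `c > 0` such that for all `T ≤ u₁ ≤ u₂ < u₃`,
`‖K(u₂,·) - ((u₃-u₂)/(u₃-u₁)) K(u₁,·) - ((u₂-u₁)/(u₃-u₁)) K(u₃,·)‖_{L²(0,T)}
  ≤ c (u₃-u₁)² (u₃-T)^(H-2)`. -/
theorem kernel_interpolation_estimate (H η T : ℝ) (hH : H ∈ Set.Ioo (0 : ℝ) 1)
    (hη : 0 < η) (hT : 0 < T) :
    ∃ c > 0, ∀ u₁ u₂ u₃ : ℝ, T ≤ u₁ → u₁ ≤ u₂ → u₂ < u₃ →
      (∫ s in (0 : ℝ)..T,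
          (η * (u₂ - s) ^ (H - 1/2)
            - ((u₃ - u₂)/(u₃ - u₁)) * (η * (u₁ - s) ^ (H - 1/2))
            - ((u₂ - u₁)/(u₃ - u₁)) * (η * (u₃ - s) ^ (H - 1/2))) ^ 2) ^ ((1 : ℝ)/2)
        ≤ c * (u₃ - u₁) ^ 2 * (u₃ - T) ^ (H - 2) := by
  obtain ⟨hH0, hH1⟩ := hH
  have hK : (0:ℝ) < 1000 * (1 + 1/H) := by positivity
  refine ⟨η * Real.sqrt (1000 * (1 + 1/H)), by positivity, ?_⟩
  intro u₁ u₂ u₃ hTu₁ h12 h23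
  have hδ : 0 < u₃ - u₁ := by linarith
  have hX : 0 < u₃ - T := by linarith
  have ht0 : 0 ≤ (u₃ - T) ^ (2*H - 4) := Real.rpow_nonneg hX.le _
  have hXH2 : 0 ≤ (u₃ - T) ^ (H - 2) := Real.rpow_nonneg hX.le _
  have hRHS0 : 0 ≤ η * Real.sqrt (1000 * (1 + 1/H)) * (u₃ - u₁) ^ 2 * (u₃ - T) ^ (H - 2) := by
    positivity
  -- degenerate case u₁ = u₂
  rcases eq_or_lt_of_le h12 with heq | h12'
  · subst heq
    have hzero : ∀ s : ℝ, (η * (u₁ - s) ^ (H - 1/2)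
            - ((u₃ - u₁)/(u₃ - u₁)) * (η * (u₁ - s) ^ (H - 1/2))
            - ((u₁ - u₁)/(u₃ - u₁)) * (η * (u₃ - s) ^ (H - 1/2))) ^ 2 = 0 := by
      intro s
      rw [sub_self u₁, zero_div, zero_mul, div_self (sub_ne_zero.mpr h23.ne')]
      ring
    rw [intervalIntegral.integral_congr (g := fun _ => (0:ℝ)) (fun s _ => hzero s)]
    rw [intervalIntegral.integral_const, smul_zero, Real.zero_rpow (by norm_num)]
    exact hRHS0
  -- main case
  set E : ℝ → ℝ := fun s => η * (u₂ - s) ^ (H - 1/2)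
            - ((u₃ - u₂)/(u₃ - u₁)) * (η * (u₁ - s) ^ (H - 1/2))
            - ((u₂ - u₁)/(u₃ - u₁)) * (η * (u₃ - s) ^ (H - 1/2)) with hE
  have hEm : Measurable E := by
    rw [hE]; fun_prop
  have hq1 : (-1:ℝ) < 2*H - 1 := by linarith
  have hq2 : (2*H - 5 : ℝ) < -1 := by linarith
  have hGint : ∀ A B : ℝ, IntervalIntegrable
      (fun s => 3 * η ^ 2 * ((u₁ - s) ^ (2*H - 1) + (u₂ - s) ^ (2*H - 1) + (u₃ - s) ^ (2*H - 1)))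
      volume A B := by
    intro A B
    exact (((intInt_shift hq1 u₁ A B).add (intInt_shift hq1 u₂ A B)).add
      (intInt_shift hq1 u₃ A B)).const_mul _
  have hcrude : ∀ s : ℝ, s ≤ T → (E s) ^ 2
      ≤ 3 * η ^ 2 * ((u₁ - s) ^ (2*H - 1) + (u₂ - s) ^ (2*H - 1) + (u₃ - s) ^ (2*H - 1)) := by
    intro s hsT
    simp only [hE]
    exact crude_sq hη (hsT.trans hTu₁) h12'.le h23
  have hsmooth : ∀ s : ℝ, s < u₁ → (E s) ^ 2
      ≤ η ^ 2 * (u₃ - u₁) ^ 4 * (u₁ - s) ^ (2*H - 5) := by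
    intro s hs
    simp only [hE]
    exact smooth_sq hH0 hH1 hη hs h12' h23
  have hE2int : ∀ A B : ℝ, 0 ≤ A → A ≤ B → B ≤ T →
      IntervalIntegrable (fun s => (E s) ^ 2) volume A B := by
    intro A B hA hAB hB
    apply IntervalIntegrable.mono_fun' (hGint A B)
    · exact (hEm.pow_const 2).aestronglyMeasurable
    · apply Filter.eventually_of_mem (self_mem_ae_restrict measurableSet_uIoc)
      intro x hx
      rw [Set.uIoc_of_le hAB] at hx
      have hxT : x ≤ T := hx.2.trans hB
      have h1 := hcrude x hxT
      calc ‖(E x) ^ 2‖ = (E x) ^ 2 := by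
            rw [Real.norm_eq_abs, abs_of_nonneg (sq_nonneg _)]
        _ ≤ _ := h1
  -- the key squared estimate
  have key : (∫ s in (0:ℝ)..T, (E s) ^ 2)
      ≤ η ^ 2 * (1000 * (1 + 1/H)) * (u₃ - u₁) ^ 4 * (u₃ - T) ^ (2*H - 4) := by
    have ha : 0 ≤ η ^ 2 * (u₃ - u₁) ^ 4 * (u₃ - T) ^ (2*H - 4) := by positivity
    have hw : (0:ℝ) ≤ 1/H := by positivity
    have haH : 0 ≤ η ^ 2 * (u₃ - u₁) ^ 4 * (u₃ - T) ^ (2*H - 4) * (1/H) :=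
      mul_nonneg ha hw
    rcases le_or_gt T (u₁ - (u₃ - u₁)) with hc1 | hc2
    · -- no splitting necessary
      have hTu : T < u₁ := by linarith
      have hmono := intervalIntegral.integral_mono_on hT.le
        (hE2int 0 T le_rfl hT.le le_rfl)
        ((intInt_cont hT.le hTu (q := 2*H - 5)).const_mul (η ^ 2 * (u₃ - u₁) ^ 4))
        (fun s hs => hsmooth s (lt_of_le_of_lt hs.2 hTu))
      have hIle := integral_shift_rpow_le_neg hT.le hTu hq2
      rw [show (2*H - 5 + 1 : ℝ) = 2*H - 4 by ring, show (-(2*H - 4) : ℝ) = 4 - 2*H by ring]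
        at hIle
      have hb16 : (u₁ - T) ^ (2*H - 4) ≤ 16 * (u₃ - T) ^ (2*H - 4) :=
        pow_two_h_le hH0 hH1 (by linarith) hX (by linarith)
      have h42 : (2:ℝ) ≤ 4 - 2*H := by linarith
      have hbnn : 0 ≤ (u₁ - T) ^ (2*H - 4) := Real.rpow_nonneg (by linarith) _
      have hdiv : (u₁ - T) ^ (2*H - 4) / (4 - 2*H) ≤ 8 * (u₃ - T) ^ (2*H - 4) := by
        have h5 : (u₁ - T) ^ (2*H - 4) / (4 - 2*H) ≤ (u₁ - T) ^ (2*H - 4) / 2 :=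
          div_le_div_of_nonneg_left hbnn (by norm_num) h42
        linarith
      calc (∫ s in (0:ℝ)..T, (E s) ^ 2)
          ≤ ∫ s in (0:ℝ)..T, η ^ 2 * (u₃ - u₁) ^ 4 * (u₁ - s) ^ (2*H - 5) := hmono
        _ = η ^ 2 * (u₃ - u₁) ^ 4 * ∫ s in (0:ℝ)..T, (u₁ - s) ^ (2*H - 5) :=
            intervalIntegral.integral_const_mul _ _
        _ ≤ η ^ 2 * (u₃ - u₁) ^ 4 * (8 * (u₃ - T) ^ (2*H - 4)) := by
            apply mul_le_mul_of_nonneg_left (hIle.trans hdiv) (by positivity)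
        _ ≤ η ^ 2 * (1000 * (1 + 1/H)) * (u₃ - u₁) ^ 4 * (u₃ - T) ^ (2*H - 4) := by
            linarith [ha, haH]
    · -- split at P
      set P : ℝ := max (u₁ - (u₃ - u₁)) 0 with hPdef
      have hP0 : 0 ≤ P := le_max_right _ _
      have hPT : P ≤ T := max_le (by linarith) hT.le
      have hPu : P < u₁ := max_lt (by linarith) (by linarith)
      have hPl : u₁ - (u₃ - u₁) ≤ P := le_max_left _ _
      have hδ16 : (u₃ - u₁) ^ (2*H - 4) ≤ 16 * (u₃ - T) ^ (2*H - 4) :=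
        pow_two_h_le hH0 hH1 hδ hX (by linarith)
      have hsplit := intervalIntegral.integral_add_adjacent_intervals
        (hE2int 0 P le_rfl hP0 hPT) (hE2int P T hP0 hPT le_rfl)
      -- region 1
      have hR1 : (∫ s in (0:ℝ)..P, (E s) ^ 2)
          ≤ 8 * (η ^ 2 * (u₃ - u₁) ^ 4 * (u₃ - T) ^ (2*H - 4)) := by
        rcases le_or_gt (u₁ - (u₃ - u₁)) 0 with h0 | h0
        · have hP : P = 0 := max_eq_right h0
          rw [hP, intervalIntegral.integral_same]
          linarith [ha]
        · have hP : P = u₁ - (u₃ - u₁) := max_eq_left h0.le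
          have hmono := intervalIntegral.integral_mono_on hP0
            (hE2int 0 P le_rfl hP0 hPT)
            ((intInt_cont hP0 hPu (q := 2*H - 5)).const_mul (η ^ 2 * (u₃ - u₁) ^ 4))
            (fun s hs => hsmooth s (lt_of_le_of_lt hs.2 hPu))
          have hIle := integral_shift_rpow_le_neg hP0 hPu hq2
          rw [show (2*H - 5 + 1 : ℝ) = 2*H - 4 by ring,
            show (-(2*H - 4) : ℝ) = 4 - 2*H by ring,
            show u₁ - P = u₃ - u₁ by rw [hP]; ring] at hIle
          have h42 : (2:ℝ) ≤ 4 - 2*H := by linarith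
          have hbnn : 0 ≤ (u₃ - u₁) ^ (2*H - 4) := Real.rpow_nonneg hδ.le _
          have hdiv : (u₃ - u₁) ^ (2*H - 4) / (4 - 2*H) ≤ 8 * (u₃ - T) ^ (2*H - 4) := by
            have h5 : (u₃ - u₁) ^ (2*H - 4) / (4 - 2*H) ≤ (u₃ - u₁) ^ (2*H - 4) / 2 :=
              div_le_div_of_nonneg_left hbnn (by norm_num) h42
            linarith
          calc (∫ s in (0:ℝ)..P, (E s) ^ 2)
              ≤ ∫ s in (0:ℝ)..P, η ^ 2 * (u₃ - u₁) ^ 4 * (u₁ - s) ^ (2*H - 5) := hmono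
            _ = η ^ 2 * (u₃ - u₁) ^ 4 * ∫ s in (0:ℝ)..P, (u₁ - s) ^ (2*H - 5) :=
                intervalIntegral.integral_const_mul _ _
            _ ≤ η ^ 2 * (u₃ - u₁) ^ 4 * (8 * (u₃ - T) ^ (2*H - 4)) := by
                apply mul_le_mul_of_nonneg_left (hIle.trans hdiv) (by positivity)
            _ = 8 * (η ^ 2 * (u₃ - u₁) ^ 4 * (u₃ - T) ^ (2*H - 4)) := by ring
      -- region 2
      have hδ2H : (u₃ - u₁) ^ (2*H) ≤ 16 * ((u₃ - u₁) ^ 4 * (u₃ - T) ^ (2*H - 4)) := by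
        have h1 : (u₃ - u₁) ^ (2*H) = (u₃ - u₁) ^ (4:ℕ) * (u₃ - u₁) ^ (2*H - 4) := by
          rw [show (2*H : ℝ) = 4 + (2*H - 4) by ring, Real.rpow_add hδ, ← Real.rpow_natCast (u₃ - u₁) 4]
          norm_num
        rw [h1]
        calc ((u₃ - u₁) ^ (4:ℕ)) * (u₃ - u₁) ^ (2*H - 4)
            ≤ ((u₃ - u₁) ^ (4:ℕ)) * (16 * (u₃ - T) ^ (2*H - 4)) :=
              mul_le_mul_of_nonneg_left hδ16 (by positivity)
          _ = 16 * ((u₃ - u₁) ^ 4 * (u₃ - T) ^ (2*H - 4)) := by ring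
      have hIbound : ∀ u : ℝ, T ≤ u → u ≤ u₃ →
          (∫ s in P..T, (u - s) ^ (2*H - 1)) ≤ 4 * (u₃ - u₁) ^ (2*H) / (2*H) := by
        intro u hu hu3
        have h1 := integral_shift_rpow_le_pos hPT hu hq1
        rw [show (2*H - 1 + 1 : ℝ) = 2*H by ring] at h1
        have hbase : u - P ≤ 2 * (u₃ - u₁) := by
          have := hPl
          linarith
        have hb0 : 0 ≤ u - P := by linarith
        have h2 : (u - P) ^ (2*H) ≤ (2 * (u₃ - u₁)) ^ (2*H) :=
          Real.rpow_le_rpow hb0 hbase (by positivity)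
        have h3 : ((2 : ℝ) * (u₃ - u₁)) ^ (2*H) = 2 ^ (2*H) * (u₃ - u₁) ^ (2*H) :=
          Real.mul_rpow (by norm_num) hδ.le
        have h4 : (2:ℝ) ^ (2*H) ≤ 4 := by
          calc (2:ℝ) ^ (2*H) ≤ 2 ^ ((2:ℝ)) :=
                Real.rpow_le_rpow_of_exponent_le one_le_two (by linarith)
            _ = 4 := by
                rw [show (2:ℝ) = ((2:ℕ):ℝ) by norm_num, Real.rpow_natCast]; norm_num
        have h5 : (u - P) ^ (2*H) ≤ 4 * (u₃ - u₁) ^ (2*H) := by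
          rw [h3] at h2
          calc (u - P) ^ (2*H) ≤ 2 ^ (2*H) * (u₃ - u₁) ^ (2*H) := h2
            _ ≤ 4 * (u₃ - u₁) ^ (2*H) :=
                mul_le_mul_of_nonneg_right h4 (Real.rpow_nonneg hδ.le _)
        calc (∫ s in P..T, (u - s) ^ (2*H - 1)) ≤ (u - P) ^ (2*H) / (2*H) := h1
          _ ≤ 4 * (u₃ - u₁) ^ (2*H) / (2*H) := by
              exact (div_le_div_iff_of_pos_right (by linarith : (0:ℝ) < 2*H)).mpr h5
      have hHne : H ≠ 0 := hH0.ne'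
      have hGval : (∫ s in P..T, 3 * η ^ 2 * ((u₁ - s) ^ (2*H - 1) + (u₂ - s) ^ (2*H - 1)
            + (u₃ - s) ^ (2*H - 1)))
          = 3 * η ^ 2 * ((∫ s in P..T, (u₁ - s) ^ (2*H - 1))
            + (∫ s in P..T, (u₂ - s) ^ (2*H - 1)) + (∫ s in P..T, (u₃ - s) ^ (2*H - 1))) := by
        rw [intervalIntegral.integral_const_mul]
        congr 1
        rw [intervalIntegral.integral_add ((intInt_shift hq1 u₁ P T).add (intInt_shift hq1 u₂ P T))
            (intInt_shift hq1 u₃ P T),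
          intervalIntegral.integral_add (intInt_shift hq1 u₁ P T) (intInt_shift hq1 u₂ P T)]
      have hR2 : (∫ s in P..T, (E s) ^ 2)
          ≤ 288 * (η ^ 2 * (u₃ - u₁) ^ 4 * (u₃ - T) ^ (2*H - 4)) * (1/H) := by
        have hmono2 := intervalIntegral.integral_mono_on hPT (hE2int P T hP0 hPT le_rfl)
          (hGint P T) (fun s hs => hcrude s hs.2)
        have hI1 := hIbound u₁ hTu₁ (by linarith)
        have hI2 := hIbound u₂ (by linarith) (by linarith)
        have hI3 := hIbound u₃ (by linarith) le_rfl
        have hIsum : (∫ s in P..T, (u₁ - s) ^ (2*H - 1)) + (∫ s in P..T, (u₂ - s) ^ (2*H - 1))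
            + (∫ s in P..T, (u₃ - s) ^ (2*H - 1))
            ≤ 3 * (4 * (u₃ - u₁) ^ (2*H) / (2*H)) := by linarith
        calc (∫ s in P..T, (E s) ^ 2)
            ≤ ∫ s in P..T, 3 * η ^ 2 * ((u₁ - s) ^ (2*H - 1) + (u₂ - s) ^ (2*H - 1)
              + (u₃ - s) ^ (2*H - 1)) := hmono2
          _ = 3 * η ^ 2 * ((∫ s in P..T, (u₁ - s) ^ (2*H - 1))
              + (∫ s in P..T, (u₂ - s) ^ (2*H - 1)) + (∫ s in P..T, (u₃ - s) ^ (2*H - 1))) := hGval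
          _ ≤ 3 * η ^ 2 * (3 * (4 * (u₃ - u₁) ^ (2*H) / (2*H))) :=
              mul_le_mul_of_nonneg_left hIsum (by positivity)
          _ = 18 * η ^ 2 * (1/H) * ((u₃ - u₁) ^ (2*H)) := by
              field_simp
              ring
          _ ≤ 18 * η ^ 2 * (1/H) * (16 * ((u₃ - u₁) ^ 4 * (u₃ - T) ^ (2*H - 4))) :=
              mul_le_mul_of_nonneg_left hδ2H (by positivity)
          _ = 288 * (η ^ 2 * (u₃ - u₁) ^ 4 * (u₃ - T) ^ (2*H - 4)) * (1/H) := by ring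
      rw [← hsplit]
      calc (∫ s in (0:ℝ)..P, (E s) ^ 2) + (∫ s in P..T, (E s) ^ 2)
          ≤ 8 * (η ^ 2 * (u₃ - u₁) ^ 4 * (u₃ - T) ^ (2*H - 4))
            + 288 * (η ^ 2 * (u₃ - u₁) ^ 4 * (u₃ - T) ^ (2*H - 4)) * (1/H) :=
            add_le_add hR1 hR2
        _ ≤ η ^ 2 * (1000 * (1 + 1/H)) * (u₃ - u₁) ^ 4 * (u₃ - T) ^ (2*H - 4) := by
            linarith [ha, haH]
    -- end
  -- conclude from key
  have hXsq : ((u₃ - T) ^ (H - 2)) ^ 2 = (u₃ - T) ^ (2*H - 4) := by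
    rw [rpow_sq hX.le, show 2*(H - 2) = 2*H - 4 by ring]
  have hsq : η ^ 2 * (1000 * (1 + 1/H)) * (u₃ - u₁) ^ 4 * (u₃ - T) ^ (2*H - 4)
      = (η * Real.sqrt (1000 * (1 + 1/H)) * (u₃ - u₁) ^ 2 * (u₃ - T) ^ (H - 2)) ^ 2 := by
    rw [mul_pow, mul_pow, mul_pow, Real.sq_sqrt hK.le, hXsq, ← pow_mul]
  have hgoal : (∫ s in (0:ℝ)..T, (E s) ^ 2) ^ ((1:ℝ)/2)
      ≤ η * Real.sqrt (1000 * (1 + 1/H)) * (u₃ - u₁) ^ 2 * (u₃ - T) ^ (H - 2) := by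
    calc (∫ s in (0:ℝ)..T, (E s) ^ 2) ^ ((1:ℝ)/2)
        = Real.sqrt (∫ s in (0:ℝ)..T, (E s) ^ 2) := (Real.sqrt_eq_rpow _).symm
      _ ≤ Real.sqrt (η ^ 2 * (1000 * (1 + 1/H)) * (u₃ - u₁) ^ 4 * (u₃ - T) ^ (2*H - 4)) :=
          Real.sqrt_le_sqrt key
      _ = η * Real.sqrt (1000 * (1 + 1/H)) * (u₃ - u₁) ^ 2 * (u₃ - T) ^ (H - 2) := by
          rw [hsq, Real.sqrt_sq hRHS0]
  exact hgoal
end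

section
/- Let g(x,y) = η²∫_0^T (s+x)^{H-1/2}(s+y)^{H-1/2} ds with η > 0, H ∈ (0,1/2), T > 0, and let F(x,y) = ∂_{xy} e^{g(x,y)} = (∂_x g ∂_y g + ∂_{xy} g) e^g. Then ∂_x F(x,y) < 0 and ∂_y F(x,y) < 0 for all x, y > 0; consequently F(x₁,y₁) > F(x₂,y₂) whenever 0 < x₁ < x₂ and 0 < y₁ < y₂. -/
open Real MeasureTheory

/-- `g(x,y) = η² ∫_0^T (s+x)^(H-1/2) (s+y)^(H-1/2) ds`. -/
noncomputable def gKer (η H T : ℝ) (x y : ℝ) : ℝ :=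
  η ^ 2 * ∫ s in (0 : ℝ)..T, (s + x) ^ (H - 1/2) * (s + y) ^ (H - 1/2)

/-- `F(x,y) = ∂_{xy} e^{g(x,y)}`. -/
noncomputable def FKer (η H T : ℝ) (x y : ℝ) : ℝ :=
  deriv (fun y' => deriv (fun x' => Real.exp (gKer η H T x' y')) x) y

open intervalIntegral Set Metric Filter


noncomputable def Jk (T p q x y : ℝ) : ℝ := ∫ s in (0:ℝ)..T, (s + x) ^ p * (s + y) ^ q

lemma Jk_symm (T p q x y : ℝ) : Jk T p q x y = Jk T q p y x := by
  unfold Jk; congr 1; funext s; ring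

lemma Jk_contOn {T x y : ℝ} (hT : 0 < T) (hx : 0 < x) (hy : 0 < y) (p q : ℝ) :
    ContinuousOn (fun s : ℝ => (s + x) ^ p * (s + y) ^ q) (uIcc 0 T) := by
  have h1 : ∀ s ∈ uIcc (0:ℝ) T, s + x ≠ 0 := by
    intro s hs
    rcases hs with ⟨h1, _⟩
    rw [min_eq_left hT.le] at h1
    positivity
  have h2 : ∀ s ∈ uIcc (0:ℝ) T, s + y ≠ 0 := by
    intro s hs
    rcases hs with ⟨h1, _⟩
    rw [min_eq_left hT.le] at h1
    positivity
  exact ((continuousOn_id.add continuousOn_const).rpow_const (fun s hs => Or.inl (h1 s hs))).mul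
    ((continuousOn_id.add continuousOn_const).rpow_const (fun s hs => Or.inl (h2 s hs)))

lemma Jk_intble {T x y : ℝ} (hT : 0 < T) (hx : 0 < x) (hy : 0 < y) (p q : ℝ) :
    IntervalIntegrable (fun s : ℝ => (s + x) ^ p * (s + y) ^ q) volume 0 T :=
  (Jk_contOn hT hx hy p q).intervalIntegrable

lemma Jk_pos {T x y : ℝ} (hT : 0 < T) (hx : 0 < x) (hy : 0 < y) (p q : ℝ) :
    0 < Jk T p q x y := by
  apply intervalIntegral_pos_of_pos_on (Jk_intble hT hx hy p q) _ hT
  intro s hs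
  have h1 : 0 < s + x := by have := hs.1; linarith
  have h2 : 0 < s + y := by have := hs.1; linarith
  positivity

lemma hasDerivAt_Jk_x {T p q x y : ℝ} (hT : 0 < T) (hp : p ≤ 1) (hq : q ≤ 0)
    (hx : 0 < x) (hy : 0 < y) :
    HasDerivAt (fun x' => Jk T p q x' y) (p * Jk T (p - 1) q x y) x := by
  have hI : Set.uIoc (0:ℝ) T = Set.Ioc 0 T := uIoc_of_le hT.le
  have key := intervalIntegral.hasDerivAt_integral_of_dominated_loc_of_deriv_le
    (F := fun x' s => (s + x') ^ p * (s + y) ^ q)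
    (F' := fun x' s => p * ((s + x') ^ (p - 1) * (s + y) ^ q))
    (x₀ := x) (a := 0) (b := T) (μ := volume)
    (bound := fun _ => |p| * ((x / 2) ^ (p - 1) * y ^ q))
    (s := ball x (x / 2)) (ball_mem_nhds x (half_pos hx))
    ?meas ?int ?meas' ?bound ?bint ?diff
  · have h2 : (∫ s in (0:ℝ)..T, p * ((s + x) ^ (p - 1) * (s + y) ^ q))
        = p * Jk T (p - 1) q x y := by
      rw [intervalIntegral.integral_const_mul]; rfl
    rw [h2] at key
    exact key.2
  case meas =>
    filter_upwards [eventually_gt_nhds hx] with x' hx'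
    exact ((Jk_contOn hT hx' hy p q).mono (Set.uIoc_subset_uIcc)).aestronglyMeasurable
      measurableSet_uIoc
  case int => exact Jk_intble hT hx hy p q
  case meas' =>
    exact ((continuousOn_const.mul (Jk_contOn hT hx hy (p-1) q)).mono
      (Set.uIoc_subset_uIcc)).aestronglyMeasurable measurableSet_uIoc
  case bound =>
    refine Filter.Eventually.of_forall fun t ht x' hx' => ?_
    rw [hI] at ht
    rw [Metric.mem_ball, Real.dist_eq, abs_lt] at hx'
    have ht0 : 0 < t := ht.1
    have hx2 : x / 2 < x' := by linarith [hx'.1]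
    have h1 : (t + x') ^ (p - 1) ≤ (x / 2) ^ (p - 1) :=
      rpow_le_rpow_of_nonpos (half_pos hx) (by linarith) (by linarith)
    have h2 : (t + y) ^ q ≤ y ^ q :=
      rpow_le_rpow_of_nonpos hy (by linarith) hq
    have hb1 : (0:ℝ) ≤ (t + x') ^ (p - 1) := rpow_nonneg (by linarith) _
    have hb2 : (0:ℝ) ≤ (t + y) ^ q := rpow_nonneg (by linarith) _
    rw [norm_mul, Real.norm_eq_abs, Real.norm_eq_abs, abs_of_nonneg (mul_nonneg hb1 hb2)]
    exact mul_le_mul le_rfl (mul_le_mul h1 h2 hb2 (rpow_nonneg (half_pos hx).le _))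
      (mul_nonneg hb1 hb2) (abs_nonneg p)
  case bint => exact intervalIntegrable_const
  case diff =>
    refine Filter.Eventually.of_forall fun t ht x' hx' => ?_
    rw [hI] at ht
    rw [Metric.mem_ball, Real.dist_eq, abs_lt] at hx'
    have htx : t + x' ≠ 0 := by nlinarith [ht.1, hx'.1]
    have h := ((((hasDerivAt_id x').const_add t).rpow_const
      (p := p) (Or.inl htx)).mul_const ((t + y) ^ q) :)
    convert h using 1
    · rfl
    · rfl
    simp only [id]
    ring

lemma hasDerivAt_Jk_y {T p q x y : ℝ} (hT : 0 < T) (hp : p ≤ 0) (hq : q ≤ 1)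
    (hx : 0 < x) (hy : 0 < y) :
    HasDerivAt (fun y' => Jk T p q x y') (q * Jk T p (q - 1) x y) y := by
  have h : (fun y' => Jk T p q x y') = fun y' => Jk T q p y' x := by
    funext y'; exact Jk_symm ..
  rw [h, Jk_symm T p (q-1) x y]
  exact hasDerivAt_Jk_x hT hq hp hy hx


lemma gKer_Jk (η H T x y : ℝ) : gKer η H T x y = η ^ 2 * Jk T (H - 1/2) (H - 1/2) x y := rfl

lemma gKer_symm (η H T x y : ℝ) : gKer η H T x y = gKer η H T y x := by
  rw [gKer_Jk, gKer_Jk, Jk_symm]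

noncomputable def Fval (η H T x y : ℝ) : ℝ :=
  Real.exp (gKer η H T x y) * (η ^ 2 * ((H - 1/2) * Jk T (H - 1/2) (H - 1/2 - 1) x y)) *
      (η ^ 2 * ((H - 1/2) * Jk T (H - 1/2 - 1) (H - 1/2) x y)) +
    Real.exp (gKer η H T x y) *
      (η ^ 2 * ((H - 1/2) * ((H - 1/2) * Jk T (H - 1/2 - 1) (H - 1/2 - 1) x y)))

lemma Fval_symm (η H T x y : ℝ) : Fval η H T x y = Fval η H T y x := by
  unfold Fval
  rw [gKer_symm, Jk_symm T (H - 1/2) (H - 1/2 - 1) x y,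
    Jk_symm T (H - 1/2 - 1) (H - 1/2) x y, Jk_symm T (H - 1/2 - 1) (H - 1/2 - 1) x y]
  ring

section main

variable {η H T x y : ℝ}

lemma hasDerivAt_gKer_x (hH : H ∈ Set.Ioo (0:ℝ) (1/2)) (hT : 0 < T) (hx : 0 < x) (hy : 0 < y) :
    HasDerivAt (fun x' => gKer η H T x' y)
      (η ^ 2 * ((H - 1/2) * Jk T (H - 1/2 - 1) (H - 1/2) x y)) x := by
  have h := (hasDerivAt_Jk_x (p := H - 1/2) (q := H - 1/2) hT (by linarith [hH.2])
    (by linarith [hH.2]) hx hy).const_mul (η ^ 2)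
  exact h

lemma hasDerivAt_gKer_y (hH : H ∈ Set.Ioo (0:ℝ) (1/2)) (hT : 0 < T) (hx : 0 < x) (hy : 0 < y) :
    HasDerivAt (fun y' => gKer η H T x y')
      (η ^ 2 * ((H - 1/2) * Jk T (H - 1/2) (H - 1/2 - 1) x y)) y := by
  have h := (hasDerivAt_Jk_y (p := H - 1/2) (q := H - 1/2) hT (by linarith [hH.2])
    (by linarith [hH.2]) hx hy).const_mul (η ^ 2)
  exact h

lemma FKer_eq_Fval (hH : H ∈ Set.Ioo (0:ℝ) (1/2)) (hT : 0 < T) (hx : 0 < x) (hy : 0 < y) :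
    FKer η H T x y = Fval η H T x y := by
  unfold FKer
  have hev : (fun y' => deriv (fun x' => Real.exp (gKer η H T x' y')) x)
      =ᶠ[nhds y] fun y' => Real.exp (gKer η H T x y') *
        (η ^ 2 * ((H - 1/2) * Jk T (H - 1/2 - 1) (H - 1/2) x y')) := by
    filter_upwards [eventually_gt_nhds hy] with y' hy'
    exact ((hasDerivAt_gKer_x hH hT hx hy').exp).deriv
  rw [hev.deriv_eq]
  have hE : HasDerivAt (fun y' => Real.exp (gKer η H T x y'))
      (Real.exp (gKer η H T x y) * (η ^ 2 * ((H - 1/2) * Jk T (H - 1/2) (H - 1/2 - 1) x y))) y :=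
    (hasDerivAt_gKer_y hH hT hx hy).exp
  have hQ : HasDerivAt (fun y' => η ^ 2 * ((H - 1/2) * Jk T (H - 1/2 - 1) (H - 1/2) x y'))
      (η ^ 2 * ((H - 1/2) * ((H - 1/2) * Jk T (H - 1/2 - 1) (H - 1/2 - 1) x y))) y :=
    ((hasDerivAt_Jk_y (p := H - 1/2 - 1) (q := H - 1/2) hT (by linarith [hH.2])
      (by linarith [hH.2]) hx hy).const_mul (H - 1/2)).const_mul (η ^ 2)
  exact (hE.mul hQ).deriv

lemma Fval_deriv_x_neg (hη : 0 < η) (hH : H ∈ Set.Ioo (0:ℝ) (1/2)) (hT : 0 < T)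
    (hx : 0 < x) (hy : 0 < y) :
    ∃ d, HasDerivAt (fun x' => Fval η H T x' y) d x ∧ d < 0 := by
  have ha : H - 1/2 < 0 := by linarith [hH.2]
  have ha1 : H - 1/2 - 1 < 0 := by linarith
  have hE : HasDerivAt (fun x' => Real.exp (gKer η H T x' y))
      (Real.exp (gKer η H T x y) * (η ^ 2 * ((H - 1/2) * Jk T (H - 1/2 - 1) (H - 1/2) x y))) x :=
    (hasDerivAt_gKer_x hH hT hx hy).exp
  have hA : HasDerivAt (fun x' => η ^ 2 * ((H - 1/2) * Jk T (H - 1/2) (H - 1/2 - 1) x' y))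
      (η ^ 2 * ((H - 1/2) * ((H - 1/2) * Jk T (H - 1/2 - 1) (H - 1/2 - 1) x y))) x :=
    ((hasDerivAt_Jk_x hT (by linarith) ha1.le hx hy).const_mul (H - 1/2)).const_mul (η ^ 2)
  have hB : HasDerivAt (fun x' => η ^ 2 * ((H - 1/2) * Jk T (H - 1/2 - 1) (H - 1/2) x' y))
      (η ^ 2 * ((H - 1/2) * ((H - 1/2 - 1) * Jk T (H - 1/2 - 1 - 1) (H - 1/2) x y))) x :=
    ((hasDerivAt_Jk_x hT (by linarith) ha.le hx hy).const_mul (H - 1/2)).const_mul (η ^ 2)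
  have hC : HasDerivAt
      (fun x' => η ^ 2 * ((H - 1/2) * ((H - 1/2) * Jk T (H - 1/2 - 1) (H - 1/2 - 1) x' y)))
      (η ^ 2 * ((H - 1/2) * ((H - 1/2) *
        ((H - 1/2 - 1) * Jk T (H - 1/2 - 1 - 1) (H - 1/2 - 1) x y)))) x :=
    (((hasDerivAt_Jk_x hT (by linarith) ha1.le hx hy).const_mul (H - 1/2)).const_mul
      (H - 1/2)).const_mul (η ^ 2)
  have hbig := ((hE.mul hA).mul hB).add (hE.mul hC)
  refine ⟨_, hbig, ?_⟩
  set a := H - 1/2 with hadef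
  have hQ1 := Jk_pos (p := a - 1) (q := a) hT hx hy
  have hQ2 := Jk_pos (p := a) (q := a - 1) hT hx hy
  have hQ3 := Jk_pos (p := a - 1) (q := a - 1) hT hx hy
  have hQ4 := Jk_pos (p := a - 1 - 1) (q := a) hT hx hy
  have hQ5 := Jk_pos (p := a - 1 - 1) (q := a - 1) hT hx hy
  have hEpos : 0 < Real.exp (gKer η H T x y) := Real.exp_pos _
  have hc : (0:ℝ) < η ^ 2 := by positivity
  have haa : 0 < a * (a - 1) := mul_pos_of_neg_of_neg ha ha1
  have ha2 : 0 < a ^ 2 := by nlinarith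
  set E := Real.exp (gKer η H T x y)
  set Q1 := Jk T (a - 1) a x y
  set Q2 := Jk T a (a - 1) x y
  set Q3 := Jk T (a - 1) (a - 1) x y
  set Q4 := Jk T (a - 1 - 1) a x y
  set Q5 := Jk T (a - 1 - 1) (a - 1) x y
  have hneg : (η ^ 2 * a) * (E * ((η ^ 2) ^ 2 * (a ^ 2 * (Q1 ^ 2 * Q2)) +
        2 * (η ^ 2 * (a ^ 2 * (Q1 * Q3))) + η ^ 2 * ((a * (a - 1)) * (Q2 * Q4)) +
        (a * (a - 1)) * Q5)) < 0 := by
    apply mul_neg_of_neg_of_pos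
    · exact mul_neg_of_pos_of_neg hc ha
    · apply mul_pos hEpos
      have t1 : 0 < (η ^ 2) ^ 2 * (a ^ 2 * (Q1 ^ 2 * Q2)) :=
        mul_pos (pow_pos hc 2) (mul_pos ha2 (mul_pos (pow_pos hQ1 2) hQ2))
      have t2 : 0 < 2 * (η ^ 2 * (a ^ 2 * (Q1 * Q3))) := by
        have := mul_pos hc (mul_pos ha2 (mul_pos hQ1 hQ3)); linarith
      have t3 : 0 < η ^ 2 * ((a * (a - 1)) * (Q2 * Q4)) :=
        mul_pos hc (mul_pos haa (mul_pos hQ2 hQ4))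
      have t4 : 0 < (a * (a - 1)) * Q5 := mul_pos haa hQ5
      linarith
  exact lt_of_eq_of_lt (by simp only [Pi.mul_apply]; ring) hneg

end main

/-- For `η > 0`, `H ∈ (0,1/2)`, `T > 0`, the function `F = ∂_{xy} e^g` satisfies
`∂_x F < 0` and `∂_y F < 0` on `(0,∞)²`; consequently `F(x₁,y₁) > F(x₂,y₂)` whenever
`0 < x₁ < x₂` and `0 < y₁ < y₂`. -/
theorem FKer_decreasing (η H T : ℝ) (hη : 0 < η)
    (hH : H ∈ Set.Ioo (0 : ℝ) (1/2)) (hT : 0 < T) :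
    (∀ x y : ℝ, 0 < x → 0 < y →
      deriv (fun x' => FKer η H T x' y) x < 0 ∧
      deriv (fun y' => FKer η H T x y') y < 0) ∧
    (∀ x₁ x₂ y₁ y₂ : ℝ, 0 < x₁ → x₁ < x₂ → 0 < y₁ → y₁ < y₂ →
      FKer η H T x₂ y₂ < FKer η H T x₁ y₁) := by
  have hder_x : ∀ x y : ℝ, 0 < x → 0 < y → deriv (fun x' => FKer η H T x' y) x < 0 := by
    intro x y hx hy
    obtain ⟨d, hd, hdneg⟩ := Fval_deriv_x_neg hη hH hT hx hy
    have hev : (fun x' => FKer η H T x' y) =ᶠ[nhds x] (fun x' => Fval η H T x' y) := by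
      filter_upwards [eventually_gt_nhds hx] with x' h using FKer_eq_Fval hH hT h hy
    rw [hev.deriv_eq, hd.deriv]; exact hdneg
  have hder_y : ∀ x y : ℝ, 0 < x → 0 < y → deriv (fun y' => FKer η H T x y') y < 0 := by
    intro x y hx hy
    obtain ⟨d, hd, hdneg⟩ := Fval_deriv_x_neg hη hH hT hy hx
    have hev : (fun y' => FKer η H T x y') =ᶠ[nhds y] (fun y' => Fval η H T y' x) := by
      filter_upwards [eventually_gt_nhds hy] with y' h
      rw [FKer_eq_Fval hH hT hx h, Fval_symm]
    rw [hev.deriv_eq, hd.deriv]; exact hdneg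
  refine ⟨fun x y hx hy => ⟨hder_x x y hx hy, hder_y x y hx hy⟩, ?_⟩
  have hanti : ∀ y : ℝ, 0 < y → StrictAntiOn (fun x' => FKer η H T x' y) (Set.Ioi 0) := by
    intro y hy
    apply strictAntiOn_of_deriv_neg (convex_Ioi 0)
    · intro x hx
      obtain ⟨d, hd, _⟩ := Fval_deriv_x_neg hη hH hT hx hy
      have hev : (fun x' => FKer η H T x' y) =ᶠ[nhds x] (fun x' => Fval η H T x' y) := by
        filter_upwards [eventually_gt_nhds hx] with x' h using FKer_eq_Fval hH hT h hy
      exact (hd.congr_of_eventuallyEq hev).continuousAt.continuousWithinAt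
    · intro x hx
      rw [interior_Ioi] at hx
      exact hder_x x y hx hy
  intro x₁ x₂ y₁ y₂ hx₁ hx12 hy₁ hy12
  have hy₂ : 0 < y₂ := hy₁.trans hy12
  have hx₂ : 0 < x₂ := hx₁.trans hx12
  have h1 : FKer η H T x₂ y₂ < FKer η H T x₁ y₂ :=
    hanti y₂ hy₂ (Set.mem_Ioi.mpr hx₁) (Set.mem_Ioi.mpr hx₂) hx12
  have h2 : FKer η H T x₁ y₂ < FKer η H T x₁ y₁ := by
    rw [FKer_eq_Fval hH hT hx₁ hy₂, Fval_symm, ← FKer_eq_Fval hH hT hy₂ hx₁,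
      FKer_eq_Fval hH hT hx₁ hy₁, Fval_symm η H T x₁ y₁, ← FKer_eq_Fval hH hT hy₁ hx₁]
    exact hanti x₁ hx₁ (Set.mem_Ioi.mpr hy₁) (Set.mem_Ioi.mpr hy₂) hy12
  exact h1.trans h2
end

section
/- Suppose a family of estimators satisfies: bias |E[P_ℓ - P]| ≤ c₁ 2^{-(1+H)ℓ}, level variance V_ℓ ≤ c₂ 2^{-2(1+H)ℓ}, per-sample cost C_ℓ ≤ c₃ 2^{2ℓ}, for some H ∈ (0,1). Then for every ε > 0 there is a choice of number of levels L and sample sizes M_ℓ ∝ 2^{-(2+H)ℓ} such that the multilevel estimator has mean-squared error ≤ ε² and total computational cost O(ε^{-2}) as ε → 0. -/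
open Real Filter Finset Asymptotics

private lemma geom_bound {r : ℝ} (h₁ : 0 ≤ r) (h₂ : r < 1) (n : ℕ) :
    ∑ i ∈ Finset.range n, r ^ i ≤ (1 - r)⁻¹ := by
  rw [← tsum_geometric_of_lt_one h₁ h₂]
  exact Summable.sum_le_tsum _ (fun i _ => pow_nonneg h₁ i) (summable_geometric_of_lt_one h₁ h₂)

private lemma rpow_mul_nat (a : ℝ) (ℓ : ℕ) :
    (2 : ℝ) ^ (a * (ℓ : ℝ)) = ((2 : ℝ) ^ a) ^ ℓ := by
  rw [← Real.rpow_natCast ((2:ℝ) ^ a) ℓ, ← Real.rpow_mul (by norm_num)]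

/-- Multilevel Monte Carlo complexity theorem, case `α = 1+H`, `β = 2(1+H) > γ = 2`,
`H ∈ (0,1)`: if the level-`ℓ` approximations satisfy `|E[P_ℓ - P]| ≤ c₁ 2^{-(1+H)ℓ}`,
`V_ℓ ≤ c₂ 2^{-2(1+H)ℓ}` and `C_ℓ ≤ c₃ 2^{2ℓ}`, then for every `ε > 0` there is a
number of levels `L` and sample sizes `M_ℓ = ⌈M₀ 2^{-(2+H)ℓ}⌉` such that the
multilevel estimator has mean-squared error `(bias L)² + ∑_{ℓ=0}^L V_ℓ/M_ℓ ≤ ε²`,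
with total cost `∑_{ℓ=0}^L M_ℓ C_ℓ = O(ε^{-2})` as `ε → 0`. -/
theorem mlmc_complexity_trapezoidal (H c₁ c₂ c₃ : ℝ) (hH : H ∈ Set.Ioo (0 : ℝ) 1)
    (hc₁ : 0 < c₁) (hc₂ : 0 < c₂) (hc₃ : 0 < c₃)
    (bias V C : ℕ → ℝ)
    (hbias : ∀ ℓ : ℕ, |bias ℓ| ≤ c₁ * 2 ^ (-(1 + H) * (ℓ : ℝ)))
    (hV : ∀ ℓ : ℕ, 0 ≤ V ℓ ∧ V ℓ ≤ c₂ * 2 ^ (-2 * (1 + H) * (ℓ : ℝ)))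
    (hC : ∀ ℓ : ℕ, 0 ≤ C ℓ ∧ C ℓ ≤ c₃ * 2 ^ (2 * (ℓ : ℝ))) :
    ∃ A > 0, ∀ ε : ℝ, 0 < ε →
      ∃ (L : ℕ) (M₀ : ℝ) (M : ℕ → ℕ), 0 < M₀ ∧
        (∀ ℓ : ℕ, M ℓ = ⌈M₀ * 2 ^ (-(2 + H) * (ℓ : ℝ))⌉₊) ∧
        (bias L) ^ 2 + ∑ ℓ ∈ Finset.range (L + 1), V ℓ / (M ℓ : ℝ) ≤ ε ^ 2 ∧
        ∑ ℓ ∈ Finset.range (L + 1), (M ℓ : ℝ) * C ℓ ≤ A * (1 + ε⁻¹ ^ 2) := by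
  obtain ⟨hH0, hH1⟩ := hH
  -- geometric ratio
  set r : ℝ := (2 : ℝ) ^ (-H) with hr_def
  have hr0 : 0 < r := Real.rpow_pos_of_pos (by norm_num) _
  have hr1 : r < 1 := Real.rpow_lt_one_of_one_lt_of_neg (by norm_num) (by linarith)
  set S : ℝ := (1 - r)⁻¹ with hS_def
  have hS0 : 0 < S := inv_pos.mpr (by linarith)
  set K : ℝ := max 1 (2 * c₁ ^ 2) with hK_def
  have hK0 : 0 < K := lt_max_of_lt_left one_pos
  refine ⟨16 * c₃ * K + 2 * c₂ * c₃ * S ^ 2, by positivity, ?_⟩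
  intro ε hε
  set x : ℝ := max 1 (c₁ * Real.sqrt 2 / ε) with hx_def
  have hx1 : (1 : ℝ) ≤ x := le_max_left _ _
  set L : ℕ := ⌈Real.logb 2 x⌉₊ with hL_def
  set M₀ : ℝ := 2 * c₂ * S / ε ^ 2 with hM₀_def
  have hM₀0 : 0 < M₀ := by positivity
  refine ⟨L, M₀, fun ℓ => ⌈M₀ * 2 ^ (-(2 + H) * (ℓ : ℝ))⌉₊, hM₀0, fun ℓ => rfl, ?_, ?_⟩
  all_goals
    have hMpos : ∀ ℓ : ℕ, (0 : ℝ) < M₀ * 2 ^ (-(2 + H) * (ℓ : ℝ)) := fun ℓ => by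
      have := Real.rpow_pos_of_pos (show (0:ℝ) < 2 by norm_num) (-(2 + H) * (ℓ : ℝ))
      positivity
  · -- MSE bound
    -- bias part
    have h2L : x ≤ (2 : ℝ) ^ (L : ℝ) := by
      calc x = (2 : ℝ) ^ Real.logb 2 x := by
              rw [Real.rpow_logb (by norm_num) (by norm_num) (by linarith)]
        _ ≤ (2 : ℝ) ^ (L : ℝ) :=
              Real.rpow_le_rpow_of_exponent_le (by norm_num) (Nat.le_ceil _)
    have hbias2 : (bias L) ^ 2 ≤ ε ^ 2 / 2 := by
      have h1 : (2 : ℝ) ^ (L : ℝ) ≤ (2 : ℝ) ^ ((1 + H) * (L : ℝ)) := by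
        apply Real.rpow_le_rpow_of_exponent_le (by norm_num)
        nlinarith [Nat.cast_nonneg (α := ℝ) L]
      have hx2 : c₁ * Real.sqrt 2 / ε ≤ (2 : ℝ) ^ ((1 + H) * (L : ℝ)) :=
        le_trans (le_trans (le_max_right _ _) h2L) h1
      have hpos : (0 : ℝ) < (2 : ℝ) ^ ((1 + H) * (L : ℝ)) :=
        Real.rpow_pos_of_pos (by norm_num) _
      have hneg : (2 : ℝ) ^ (-(1 + H) * (L : ℝ)) = ((2 : ℝ) ^ ((1 + H) * (L : ℝ)))⁻¹ := by
        rw [show -(1 + H) * (L : ℝ) = -((1 + H) * (L : ℝ)) by ring, Real.rpow_neg (by norm_num)]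
      have hb : |bias L| ≤ ε / Real.sqrt 2 := by
        have := hbias L
        rw [hneg] at this
        refine this.trans ?_
        rw [div_le_iff₀ hε] at hx2
        have hsq : (0:ℝ) < Real.sqrt 2 := Real.sqrt_pos.mpr (by norm_num)
        rw [mul_inv_le_iff₀ hpos, div_mul_eq_mul_div, le_div_iff₀ hsq]
        linarith
      have : (bias L) ^ 2 ≤ (ε / Real.sqrt 2) ^ 2 := by
        rw [← sq_abs]
        exact pow_le_pow_left₀ (abs_nonneg _) hb 2
      refine this.trans_eq ?_
      rw [div_pow, Real.sq_sqrt (by norm_num)]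
    -- variance part
    have hvar : ∑ ℓ ∈ Finset.range (L + 1), V ℓ / (⌈M₀ * 2 ^ (-(2 + H) * (ℓ:ℝ))⌉₊ : ℝ)
        ≤ ε ^ 2 / 2 := by
      have hterm : ∀ ℓ ∈ Finset.range (L + 1),
          V ℓ / (⌈M₀ * 2 ^ (-(2 + H) * (ℓ:ℝ))⌉₊ : ℝ) ≤ (c₂ / M₀) * r ^ ℓ := by
        intro ℓ _
        have hceil : M₀ * 2 ^ (-(2 + H) * (ℓ:ℝ)) ≤ (⌈M₀ * 2 ^ (-(2 + H) * (ℓ:ℝ))⌉₊ : ℝ) :=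
          Nat.le_ceil _
        have hMc : (0 : ℝ) < (⌈M₀ * 2 ^ (-(2 + H) * (ℓ:ℝ))⌉₊ : ℝ) := lt_of_lt_of_le (hMpos ℓ) hceil
        calc V ℓ / (⌈M₀ * 2 ^ (-(2 + H) * (ℓ:ℝ))⌉₊ : ℝ)
            ≤ (c₂ * 2 ^ (-2 * (1 + H) * (ℓ:ℝ))) / (M₀ * 2 ^ (-(2 + H) * (ℓ:ℝ))) := by
              apply div_le_div₀ (by positivity) (hV ℓ).2 (hMpos ℓ) hceil
          _ = (c₂ / M₀) * r ^ ℓ := by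
              rw [← rpow_mul_nat]
              rw [show (-H) * (ℓ:ℝ) = (-2 * (1 + H) * (ℓ:ℝ)) - (-(2 + H) * (ℓ:ℝ)) by ring]
              rw [Real.rpow_sub (by norm_num), mul_div_mul_comm]
      calc ∑ ℓ ∈ Finset.range (L + 1), V ℓ / (⌈M₀ * 2 ^ (-(2 + H) * (ℓ:ℝ))⌉₊ : ℝ)
          ≤ ∑ ℓ ∈ Finset.range (L + 1), (c₂ / M₀) * r ^ ℓ := Finset.sum_le_sum hterm
        _ = (c₂ / M₀) * ∑ ℓ ∈ Finset.range (L + 1), r ^ ℓ := by rw [Finset.mul_sum]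
        _ ≤ (c₂ / M₀) * S := by
            apply mul_le_mul_of_nonneg_left (geom_bound hr0.le hr1 _) (by positivity)
        _ = ε ^ 2 / 2 := by
            rw [hM₀_def]
            field_simp
    linarith
  · -- cost bound
    have h2L : (2 : ℝ) ^ (L : ℝ) ≤ 2 * x := by
      have : (L : ℝ) ≤ Real.logb 2 x + 1 := by
        have := Nat.ceil_lt_add_one (R := ℝ) (Real.logb_nonneg (b := 2) one_lt_two hx1)
        exact this.le
      calc (2 : ℝ) ^ (L : ℝ) ≤ (2 : ℝ) ^ (Real.logb 2 x + 1) :=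
            Real.rpow_le_rpow_of_exponent_le (by norm_num) this
        _ = 2 * x := by
            rw [Real.rpow_add (by norm_num), Real.rpow_logb (by norm_num) (by norm_num)
              (by linarith), Real.rpow_one]; ring
    have hterm : ∀ ℓ ∈ Finset.range (L + 1),
        (⌈M₀ * 2 ^ (-(2 + H) * (ℓ:ℝ))⌉₊ : ℝ) * C ℓ ≤ c₃ * M₀ * r ^ ℓ + c₃ * 4 ^ ℓ := by
      intro ℓ _
      have hceil : (⌈M₀ * 2 ^ (-(2 + H) * (ℓ:ℝ))⌉₊ : ℝ) < M₀ * 2 ^ (-(2 + H) * (ℓ:ℝ)) + 1 :=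
        Nat.ceil_lt_add_one (hMpos ℓ).le
      have hC2 : (0:ℝ) ≤ (2 : ℝ) ^ (2 * (ℓ:ℝ)) := (Real.rpow_pos_of_pos (by norm_num) _).le
      calc (⌈M₀ * 2 ^ (-(2 + H) * (ℓ:ℝ))⌉₊ : ℝ) * C ℓ
          ≤ (M₀ * 2 ^ (-(2 + H) * (ℓ:ℝ)) + 1) * (c₃ * 2 ^ (2 * (ℓ:ℝ))) := by
            apply mul_le_mul hceil.le (hC ℓ).2 (hC ℓ).1
            positivity
        _ = c₃ * M₀ * ((2:ℝ) ^ (-(2 + H) * (ℓ:ℝ)) * (2:ℝ) ^ (2 * (ℓ:ℝ)))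
              + c₃ * (2:ℝ) ^ (2 * (ℓ:ℝ)) := by ring
        _ = c₃ * M₀ * r ^ ℓ + c₃ * 4 ^ ℓ := by
            rw [← Real.rpow_add (by norm_num),
              show -(2 + H) * (ℓ:ℝ) + 2 * (ℓ:ℝ) = (-H) * (ℓ:ℝ) by ring,
              rpow_mul_nat, rpow_mul_nat]
            norm_num
            exact Or.inl rfl
    have hgeo4 : ∑ ℓ ∈ Finset.range (L + 1), (4:ℝ) ^ ℓ ≤ 4 * 4 ^ L := by
      have := geom_sum_eq (show (4:ℝ) ≠ 1 by norm_num) (L + 1)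
      rw [this]
      rw [div_le_iff₀ (by norm_num)]
      have : (0:ℝ) ≤ 4 ^ L := by positivity
      rw [pow_succ]
      nlinarith
    have h4L : (4:ℝ) ^ L ≤ 4 * K * (1 + ε⁻¹ ^ 2) := by
      have h1 : (4:ℝ) ^ L = ((2:ℝ) ^ (L:ℝ)) ^ 2 := by
        rw [Real.rpow_natCast, ← pow_mul, Nat.mul_comm, pow_mul]
        norm_num
      have h2 : ((2:ℝ) ^ (L:ℝ)) ^ 2 ≤ (2 * x) ^ 2 := by
        apply pow_le_pow_left₀ (Real.rpow_pos_of_pos (by norm_num) _).le h2L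
      have hx2 : x ^ 2 ≤ K * (1 + ε⁻¹ ^ 2) := by
        rcases max_cases 1 (c₁ * Real.sqrt 2 / ε) with ⟨h, _⟩ | ⟨h, _⟩
        · rw [hx_def, h]
          have : (1:ℝ) ≤ K := le_max_left _ _
          have hε2 : (0:ℝ) ≤ ε⁻¹ ^ 2 := by positivity
          nlinarith
        · rw [hx_def, h]
          have hs : (c₁ * Real.sqrt 2 / ε) ^ 2 = 2 * c₁ ^ 2 * ε⁻¹ ^ 2 := by
            rw [div_pow, mul_pow, Real.sq_sqrt (by norm_num)]
            field_simp
          rw [hs]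
          have h2c : 2 * c₁ ^ 2 ≤ K := le_max_right _ _
          have hε2 : (0:ℝ) ≤ ε⁻¹ ^ 2 := by positivity
          nlinarith
      calc (4:ℝ) ^ L = ((2:ℝ) ^ (L:ℝ)) ^ 2 := h1
        _ ≤ (2 * x) ^ 2 := h2
        _ = 4 * x ^ 2 := by ring
        _ ≤ 4 * (K * (1 + ε⁻¹ ^ 2)) := by linarith
        _ = 4 * K * (1 + ε⁻¹ ^ 2) := by ring
    calc ∑ ℓ ∈ Finset.range (L + 1), (⌈M₀ * 2 ^ (-(2 + H) * (ℓ:ℝ))⌉₊ : ℝ) * C ℓ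
        ≤ ∑ ℓ ∈ Finset.range (L + 1), (c₃ * M₀ * r ^ ℓ + c₃ * 4 ^ ℓ) :=
          Finset.sum_le_sum hterm
      _ = c₃ * M₀ * (∑ ℓ ∈ Finset.range (L + 1), r ^ ℓ)
            + c₃ * (∑ ℓ ∈ Finset.range (L + 1), (4:ℝ) ^ ℓ) := by
          rw [Finset.sum_add_distrib, Finset.mul_sum, Finset.mul_sum]
      _ ≤ c₃ * M₀ * S + c₃ * (4 * 4 ^ L) := by
          gcongr
          exact geom_bound hr0.le hr1 _
      _ ≤ (16 * c₃ * K + 2 * c₂ * c₃ * S ^ 2) * (1 + ε⁻¹ ^ 2) := by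
          have hM : c₃ * M₀ * S = 2 * c₂ * c₃ * S ^ 2 * ε⁻¹ ^ 2 := by
            rw [hM₀_def]
            field_simp
          have h4 : c₃ * (4 * 4 ^ L) ≤ 16 * c₃ * K * (1 + ε⁻¹ ^ 2) :=
            calc c₃ * (4 * 4 ^ L) ≤ c₃ * (4 * (4 * K * (1 + ε⁻¹ ^ 2))) := by
                  apply mul_le_mul_of_nonneg_left _ hc₃.le
                  linarith
              _ = 16 * c₃ * K * (1 + ε⁻¹ ^ 2) := by ring
          have hε2 : (0:ℝ) ≤ ε⁻¹ ^ 2 := by positivity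
          have hP : (0:ℝ) ≤ 2 * c₂ * c₃ * S ^ 2 := by positivity
          have hexp : (16 * c₃ * K + 2 * c₂ * c₃ * S ^ 2) * (1 + ε⁻¹ ^ 2)
              = 16 * c₃ * K * (1 + ε⁻¹ ^ 2) + 2 * c₂ * c₃ * S ^ 2
                + 2 * c₂ * c₃ * S ^ 2 * ε⁻¹ ^ 2 := by ring
          rw [hexp]
          linarith
end
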